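/- arXiv:2305.11478 — 4 statements merged into one kernel-verified Lean document; each statement's English description precedes it below -/
import Mathlib

section
/- Let d ≥ 1 and let A be a finite subset of Δ^d with N := |A| ≥ 1 such that every coordinate of every element of A belongs to a finite set S ⊆ ℕ with |S| = m. Fix an injection π : A → ℕ. Then for every λ > 0 the Lebesgue measure of the set {u ∈ [0,1] : sup_{t ∈ [0,1]} |Σ_{ȷ∈A} r_{π(ȷ)}(u)·𝐫_ȷ(t)| > λ} is at most 2^{m+1}·e^{−λ²/(2N)}. (Claim established in the proof of Theorem 1 via Bernstein's inequality and a union bound over the at most 2^m sign patterns of (𝐫_ȷ(t))_{ȷ∈A}.) -/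
open MeasureTheory

/-- Rademacher function `r_j(t) = (-1)^⌊2^j t⌋`. -/
noncomputable def rademacher (j : ℕ) (t : ℝ) : ℝ := (-1 : ℝ) ^ ⌊(2 : ℝ) ^ j * t⌋

/-- Rademacher chaos `𝐫_ȷ = ∏ i, r_{ȷ i}`. -/
noncomputable def chaos {d : ℕ} (j : Fin d → ℕ) (t : ℝ) : ℝ := ∏ i, rademacher (j i) t

/-- The lower triangular index set `Δ^d = {ȷ : j₁ > j₂ > ... > j_d ≥ 1}`. -/
def Delta (d : ℕ) : Set (Fin d → ℕ) := {j | StrictAnti j ∧ ∀ i, 1 ≤ j i}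

/-- The `L_p[0,1]` norm, `1 ≤ p < ∞`. -/
noncomputable def LpNorm (p : ℝ) (f : ℝ → ℝ) : ℝ :=
  (∫ t in Set.Icc (0 : ℝ) 1, |f t| ^ p) ^ (1 / p)

/-- The `L_∞[0,1]` norm (essential supremum on `[0,1]`). -/
noncomputable def LinftyNorm (f : ℝ → ℝ) : ℝ :=
  (eLpNorm f ⊤ (volume.restrict (Set.Icc (0 : ℝ) 1))).toReal

namespace Stmt0Aux

lemma comp_div {L k i : ℕ} (hk : k ≤ L) (hi : i < 2^L) :
    (2^L - 1 - i) / 2^k = 2^(L-k) - 1 - i / 2^k := by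
  have hB : 0 < 2^k := Nat.two_pow_pos k
  have hLk : (2:ℕ)^L = 2^(L-k) * 2^k := by rw [← pow_add]; congr 1; omega
  have hqlt : i / 2^k < 2^(L-k) := by
    rw [Nat.div_lt_iff_lt_mul hB]; exact hLk ▸ hi
  obtain ⟨q, r, hrlt, hqr⟩ : ∃ q r, r < 2^k ∧ i = 2^k * q + r :=
    ⟨i / 2^k, i % 2^k, Nat.mod_lt _ hB, (Nat.div_add_mod i (2^k)).symm⟩
  have hqeq : i / 2^k = q := by
    rw [hqr, Nat.mul_add_div hB, Nat.div_eq_of_lt hrlt, add_zero]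
  rw [hqeq] at hqlt ⊢
  have key : 2^L - 1 - i = 2^k * (2^(L-k) - 1 - q) + (2^k - 1 - r) := by
    have h1 : (1:ℕ) ≤ 2^(L-k) := Nat.one_le_two_pow
    have h2 : (1:ℕ) ≤ 2^k := Nat.one_le_two_pow
    have h3 : (1:ℕ) ≤ 2^L := Nat.one_le_two_pow
    zify [show i ≤ 2^L - 1 by omega, show q ≤ 2^(L-k) - 1 by omega,
      show r ≤ 2^k - 1 by omega, h1, h2, h3]
    have hLkZ : (2:ℤ)^L = 2^(L-k) * 2^k := by exact_mod_cast hLk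
    have hqrZ : (i:ℤ) = 2^k * q + r := by exact_mod_cast hqr
    linear_combination hLkZ - hqrZ
  rw [key, Nat.mul_add_div hB, Nat.div_eq_of_lt (by omega), add_zero]

lemma neg_one_pow_comp {L k i : ℕ} (hk : k < L) (hi : i < 2^L) :
    ((-1:ℝ))^((2^L - 1 - i)/2^k) = -((-1:ℝ))^(i/2^k) := by
  rw [comp_div hk.le hi]
  have hB : 0 < 2^k := Nat.two_pow_pos k
  have hqlt : i / 2^k < 2^(L-k) := by
    rw [Nat.div_lt_iff_lt_mul hB]
    calc i < 2^L := hi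
    _ = 2^(L-k) * 2^k := by rw [← pow_add]; congr 1; omega
  have hE : (2:ℕ)^(L-k) = 2 * 2^(L-k-1) := by
    rw [← pow_succ']; congr 1; omega
  rcases Nat.even_or_odd (i / 2^k) with h | h
  · have h' := Nat.even_iff.mp h
    have hodd : Odd (2^(L-k) - 1 - i / 2^k) := Nat.odd_iff.mpr (by omega)
    rw [hodd.neg_one_pow, h.neg_one_pow]
  · have h' := Nat.odd_iff.mp h
    have heven : Even (2^(L-k) - 1 - i / 2^k) := Nat.even_iff.mpr (by omega)
    rw [heven.neg_one_pow, h.neg_one_pow, neg_neg]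

lemma add_pow_div {K k : ℕ} (i : ℕ) (hk : k ≤ K) :
    (2^K + i) / 2^k = 2^(K-k) + i/2^k := by
  have hB : 0 < 2^k := Nat.two_pow_pos k
  have h : (2:ℕ)^K = 2^k * 2^(K-k) := by rw [← pow_add]; congr 1; omega
  rw [h, Nat.mul_add_div hB]

lemma neg_one_pow_shift {K k : ℕ} (i : ℕ) (hk : k < K) :
    ((-1:ℝ))^((2^K + i)/2^k) = (-1:ℝ)^(i/2^k) := by
  rw [add_pow_div i hk.le, pow_add]
  have hev : Even ((2:ℕ)^(K-k)) := by
    refine ⟨2^(K-k-1), ?_⟩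
    rw [← two_mul, ← pow_succ']; congr 1; omega
  rw [hev.neg_one_pow, one_mul]

lemma neg_one_pow_shift_top {K : ℕ} (i : ℕ) (hi : i < 2^K) :
    ((-1:ℝ))^((2^K + i)/2^K) = -1 := by
  have h : (2^K + i)/2^K = 1 := by
    rw [add_pow_div i le_rfl, Nat.sub_self, pow_zero, Nat.div_eq_of_lt hi]
  rw [h, pow_one]

lemma neg_one_pow_top {K : ℕ} (i : ℕ) (hi : i < 2^K) : ((-1:ℝ))^(i/2^K) = 1 := by
  rw [Nat.div_eq_of_lt hi, pow_zero]

lemma factorization {ι : Type*} [DecidableEq ι] (K : ℕ) :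
    ∀ (A : Finset ι) (q : ι → ℕ) (f : ι → ℝ → ℝ), Set.InjOn q ↑A → (∀ j ∈ A, q j < K) →
      ∑ i ∈ Finset.range (2^K), ∏ j ∈ A, f j ((-1:ℝ)^(i / 2^(q j))) =
        2^K * ∏ j ∈ A, ((f j 1 + f j (-1)) / 2) := by
  induction K with
  | zero =>
    intro A q f hinj hq
    have hA : A = ∅ := Finset.eq_empty_of_forall_notMem fun j hj => by have := hq j hj; omega
    subst hA; simp
  | succ K ih =>
    intro A q f hinj hq
    have hsplit : ∑ i ∈ Finset.range (2^(K+1)), ∏ j ∈ A, f j ((-1:ℝ)^(i / 2^(q j)))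
        = ∑ i ∈ Finset.range (2^K), ∏ j ∈ A, f j ((-1:ℝ)^(i / 2^(q j)))
          + ∑ i ∈ Finset.range (2^K), ∏ j ∈ A, f j ((-1:ℝ)^((2^K + i) / 2^(q j))) := by
      have h2 : 2^(K+1) = 2^K + 2^K := by ring
      rw [h2, ← Finset.sum_range_add_sum_Ico _ (Nat.le_add_right (2^K) (2^K))]
      congr 1
      rw [Finset.sum_Ico_eq_sum_range]
      simp
    by_cases hK : ∃ j0 ∈ A, q j0 = K
    · obtain ⟨j0, hj0A, hj0⟩ := hK
      have hsubA : ∀ j ∈ A.erase j0, q j < K := by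
        intro j hj
        have hja := Finset.mem_of_mem_erase hj
        have hne := Finset.ne_of_mem_erase hj
        have h1 := hq j hja
        rcases Nat.lt_or_ge (q j) K with h | h
        · exact h
        · exact absurd (hinj hja hj0A (by omega)) hne
      have hinj' : Set.InjOn q ↑(A.erase j0) :=
        hinj.mono (by intro x hx; exact Finset.mem_of_mem_erase hx)
      have hlow : ∑ i ∈ Finset.range (2^K), ∏ j ∈ A, f j ((-1:ℝ)^(i / 2^(q j)))
          = f j0 1 * (2^K * ∏ j ∈ A.erase j0, ((f j 1 + f j (-1))/2)) := by
        rw [← ih (A.erase j0) q f hinj' hsubA, Finset.mul_sum]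
        refine Finset.sum_congr rfl fun i hi => ?_
        rw [← Finset.mul_prod_erase A _ hj0A]
        congr 2
        rw [hj0, neg_one_pow_top i (Finset.mem_range.mp hi)]
      have hup : ∑ i ∈ Finset.range (2^K), ∏ j ∈ A, f j ((-1:ℝ)^((2^K + i) / 2^(q j)))
          = f j0 (-1) * (2^K * ∏ j ∈ A.erase j0, ((f j 1 + f j (-1))/2)) := by
        rw [← ih (A.erase j0) q f hinj' hsubA, Finset.mul_sum]
        refine Finset.sum_congr rfl fun i hi => ?_
        rw [← Finset.mul_prod_erase A _ hj0A]
        have hi' := Finset.mem_range.mp hi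
        have e1 : f j0 ((-1:ℝ)^((2^K + i) / 2^(q j0))) = f j0 (-1) := by
          rw [hj0, neg_one_pow_shift_top i hi']
        rw [e1]
        congr 1
        refine Finset.prod_congr rfl fun j hj => ?_
        rw [neg_one_pow_shift i (hsubA j hj)]
      rw [hsplit, hlow, hup, ← Finset.mul_prod_erase A (fun j => (f j 1 + f j (-1))/2) hj0A]
      ring
    · push_neg at hK
      have hq' : ∀ j ∈ A, q j < K := fun j hj => by
        have h1 := hq j hj; have h2 := hK j hj; omega
      have hup : ∑ i ∈ Finset.range (2^K), ∏ j ∈ A, f j ((-1:ℝ)^((2^K + i) / 2^(q j)))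
          = ∑ i ∈ Finset.range (2^K), ∏ j ∈ A, f j ((-1:ℝ)^(i / 2^(q j))) := by
        refine Finset.sum_congr rfl fun i hi => Finset.prod_congr rfl fun j hj => ?_
        rw [neg_one_pow_shift i (hq' j hj)]
      rw [hsplit, hup, ih A q f hinj hq']
      ring

lemma chernoff_one {ι : Type*} [DecidableEq ι] (K : ℕ) (A : Finset ι) (hN : 1 ≤ A.card)
    (q : ι → ℕ) (hinj : Set.InjOn q ↑A) (hq : ∀ j ∈ A, q j < K)
    (c : ι → ℝ) (hc : ∀ j ∈ A, c j = 1 ∨ c j = -1) (lam : ℝ) (hlam : 0 < lam) :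
    (((Finset.range (2^K)).filter
        (fun i => lam < ∑ j ∈ A, c j * (-1:ℝ)^(i / 2^(q j)))).card : ℝ)
      ≤ 2^K * Real.exp (-(lam^2) / (2 * A.card)) := by
  classical
  set N : ℝ := (A.card : ℝ) with hNdef
  have hNpos : (0:ℝ) < N := by
    have : 0 < A.card := hN
    rw [hNdef]; exact_mod_cast this
  set s : ℝ := lam / N with hs
  have hspos : 0 < s := div_pos hlam hNpos
  set F : Finset ℕ := (Finset.range (2^K)).filter
      (fun i => lam < ∑ j ∈ A, c j * (-1:ℝ)^(i / 2^(q j))) with hF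
  have step1 : (F.card : ℝ) ≤
      ∑ i ∈ Finset.range (2^K), Real.exp (s * ((∑ j ∈ A, c j * (-1:ℝ)^(i / 2^(q j))) - lam)) := by
    rw [Finset.card_eq_sum_ones F]
    push_cast
    refine le_trans (Finset.sum_le_sum fun i hi => ?_)
      (Finset.sum_le_sum_of_subset_of_nonneg (Finset.filter_subset _ _)
        (fun i _ _ => (Real.exp_pos _).le))
    have hi' := (Finset.mem_filter.mp hi).2
    have hge : (0:ℝ) ≤ s * ((∑ j ∈ A, c j * (-1:ℝ)^(i / 2^(q j))) - lam) := by
      apply mul_nonneg hspos.le; linarith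
    calc (1:ℝ) = Real.exp 0 := Real.exp_zero.symm
    _ ≤ _ := Real.exp_le_exp.mpr hge
  have step2 : ∑ i ∈ Finset.range (2^K),
        Real.exp (s * ((∑ j ∈ A, c j * (-1:ℝ)^(i / 2^(q j))) - lam))
      = Real.exp (-(s*lam)) * (2^K *
          ∏ j ∈ A, ((Real.exp (s * (c j * 1)) + Real.exp (s * (c j * (-1))))/2)) := by
    rw [← factorization K A q (fun j x => Real.exp (s * (c j * x))) hinj hq, Finset.mul_sum]
    refine Finset.sum_congr rfl fun i _ => ?_
    rw [mul_sub, sub_eq_add_neg, Finset.mul_sum, Real.exp_add, Real.exp_sum]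
    ring
  have step3 : ∏ j ∈ A, ((Real.exp (s * (c j * 1)) + Real.exp (s * (c j * (-1))))/2)
      ≤ Real.exp (s^2/2) ^ A.card := by
    rw [← Finset.prod_const]
    refine Finset.prod_le_prod (fun j _ => by positivity) (fun j hj => ?_)
    have hcosh : (Real.exp (s * (c j * 1)) + Real.exp (s * (c j * (-1))))/2
        = Real.cosh (s * c j) := by
      rw [Real.cosh_eq]; ring_nf
    rw [hcosh]
    rcases hc j hj with h | h <;> simp only [h, mul_one, mul_neg_one, Real.cosh_neg]
      <;> exact Real.cosh_le_exp_half_sq s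
  calc (F.card : ℝ) ≤ _ := step1
  _ = _ := step2
  _ ≤ Real.exp (-(s*lam)) * (2^K * Real.exp (s^2/2) ^ A.card) := by gcongr
  _ = 2^K * Real.exp (-(lam^2) / (2 * N)) := by
      rw [← Real.exp_nat_mul]
      rw [show Real.exp (-(s*lam)) * (2^K * Real.exp (↑A.card * (s^2/2)))
          = 2^K * (Real.exp (-(s*lam)) * Real.exp (↑A.card * (s^2/2))) from by ring,
        ← Real.exp_add]
      congr 1
      rw [hs, ← hNdef]
      field_simp
      ring
  _ = 2^K * Real.exp (-(lam^2) / (2 * A.card)) := rfl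

lemma chernoff_two {ι : Type*} [DecidableEq ι] (K : ℕ) (A : Finset ι) (hN : 1 ≤ A.card)
    (q : ι → ℕ) (hinj : Set.InjOn q ↑A) (hq : ∀ j ∈ A, q j < K)
    (c : ι → ℝ) (hc : ∀ j ∈ A, c j = 1 ∨ c j = -1) (lam : ℝ) (hlam : 0 < lam) :
    (((Finset.range (2^K)).filter
        (fun i => lam < |∑ j ∈ A, c j * (-1:ℝ)^(i / 2^(q j))|)).card : ℝ)
      ≤ 2^K * (2 * Real.exp (-(lam^2) / (2 * A.card))) := by
  classical
  have hsub : (Finset.range (2^K)).filter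
        (fun i => lam < |∑ j ∈ A, c j * (-1:ℝ)^(i / 2^(q j))|)
      ⊆ ((Finset.range (2^K)).filter
          (fun i => lam < ∑ j ∈ A, c j * (-1:ℝ)^(i / 2^(q j))))
        ∪ ((Finset.range (2^K)).filter
          (fun i => lam < ∑ j ∈ A, (-(c j)) * (-1:ℝ)^(i / 2^(q j)))) := by
    intro i hi
    obtain ⟨hir, habs⟩ := Finset.mem_filter.mp hi
    rcases lt_abs.mp habs with h | h
    · exact Finset.mem_union_left _ (Finset.mem_filter.mpr ⟨hir, h⟩)
    · refine Finset.mem_union_right _ (Finset.mem_filter.mpr ⟨hir, ?_⟩)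
      calc lam < -∑ j ∈ A, c j * (-1:ℝ)^(i / 2^(q j)) := h
      _ = ∑ j ∈ A, (-(c j)) * (-1:ℝ)^(i / 2^(q j)) := by
          rw [← Finset.sum_neg_distrib]
          exact Finset.sum_congr rfl fun j _ => by ring
  have h1 := chernoff_one K A hN q hinj hq c hc lam hlam
  have h2 := chernoff_one K A hN q hinj hq (fun j => -(c j))
    (fun j hj => by rcases hc j hj with h | h <;> simp [h]) lam hlam
  have hcast : (((Finset.range (2^K)).filter
      (fun i => lam < |∑ j ∈ A, c j * (-1:ℝ)^(i / 2^(q j))|)).card : ℝ)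
      ≤ (((Finset.range (2^K)).filter
          (fun i => lam < ∑ j ∈ A, c j * (-1:ℝ)^(i / 2^(q j)))).card : ℝ)
        + (((Finset.range (2^K)).filter
          (fun i => lam < ∑ j ∈ A, (-(c j)) * (-1:ℝ)^(i / 2^(q j)))).card : ℝ) := by
    exact_mod_cast le_trans (Finset.card_le_card hsub) (Finset.card_union_le _ _)
  linarith

lemma chernoff_main {ι : Type*} [DecidableEq ι] (K : ℕ) (A : Finset ι) (hN : 1 ≤ A.card)
    (q : ι → ℕ) (hinj : Set.InjOn q ↑A) (hq : ∀ j ∈ A, q j ≤ K)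
    (c : ι → ℝ) (hc : ∀ j ∈ A, c j = 1 ∨ c j = -1) (lam : ℝ) (hlam : 0 < lam) :
    (((Finset.range (2^K)).filter
        (fun i => lam < |∑ j ∈ A, c j * (-1:ℝ)^(i / 2^(q j))|)).card : ℝ)
      ≤ 2^K * (2 * Real.exp (-(lam^2) / (2 * A.card))) := by
  classical
  set P : ℕ → Prop := fun i => lam < |∑ j ∈ A, c j * (-1:ℝ)^(i / 2^(q j))| with hP
  set bad : Finset ℕ := (Finset.range (2^K)).filter P with hbad
  set bad' : Finset ℕ := (Finset.range (2^(K+1))).filter P with hbad'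
  have hphi : ∀ i ∈ bad, (2^(K+1) - 1 - i) ∈ bad' := by
    intro i hi
    obtain ⟨hir, hPi⟩ := Finset.mem_filter.mp hi
    have hir' := Finset.mem_range.mp hir
    have hlt : i < 2^(K+1) := by
      have h0 : (2:ℕ)^K < 2^(K+1) := by
        have := Nat.two_pow_pos K
        calc (2:ℕ)^K < 2^K + 2^K := by omega
        _ = 2^(K+1) := by ring
      omega
    refine Finset.mem_filter.mpr ⟨Finset.mem_range.mpr (by omega), ?_⟩
    rw [hP]
    have hsum : ∑ j ∈ A, c j * (-1:ℝ)^((2^(K+1) - 1 - i) / 2^(q j))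
        = -∑ j ∈ A, c j * (-1:ℝ)^(i / 2^(q j)) := by
      rw [← Finset.sum_neg_distrib]
      refine Finset.sum_congr rfl fun j hj => ?_
      rw [neg_one_pow_comp (by have := hq j hj; omega) hlt]
      ring
    simpa [hsum, abs_neg] using hPi
  have hsub1 : bad ⊆ bad' := by
    intro i hi
    obtain ⟨hir, hPi⟩ := Finset.mem_filter.mp hi
    have hir' := Finset.mem_range.mp hir
    have hle : (2:ℕ)^K ≤ 2^(K+1) := Nat.pow_le_pow_right (by norm_num) (by omega)
    exact Finset.mem_filter.mpr ⟨Finset.mem_range.mpr (by omega), hPi⟩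
  have hsub2 : bad.image (fun i => 2^(K+1) - 1 - i) ⊆ bad' := by
    intro x hx
    obtain ⟨i, hi, rfl⟩ := Finset.mem_image.mp hx
    exact hphi i hi
  have hdisj : Disjoint bad (bad.image (fun i => 2^(K+1) - 1 - i)) := by
    rw [Finset.disjoint_left]
    intro x hx hx'
    obtain ⟨i, hi, rfl⟩ := Finset.mem_image.mp hx'
    have h1 := Finset.mem_range.mp (Finset.mem_filter.mp hx).1
    have h2 := Finset.mem_range.mp (Finset.mem_filter.mp hi).1
    have hK1 : (2:ℕ)^(K+1) = 2^K + 2^K := by ring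
    omega
  have hinjphi : Set.InjOn (fun i => 2^(K+1) - 1 - i) ↑bad := by
    intro x hx y hy hxy
    have h1 := Finset.mem_range.mp (Finset.mem_filter.mp hx).1
    have h2 := Finset.mem_range.mp (Finset.mem_filter.mp hy).1
    have hK1 : (2:ℕ)^(K+1) = 2^K + 2^K := by ring
    simp only at hxy
    omega
  have hcard : 2 * bad.card ≤ bad'.card := by
    have hunion : bad ∪ bad.image (fun i => 2^(K+1) - 1 - i) ⊆ bad' :=
      Finset.union_subset hsub1 hsub2
    have hc2 := Finset.card_le_card hunion
    rw [Finset.card_union_of_disjoint hdisj, Finset.card_image_of_injOn hinjphi] at hc2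
    omega
  have hmain := chernoff_two (K+1) A hN q hinj (fun j hj => by have := hq j hj; omega)
    c hc lam hlam
  have hcardR : (bad.card : ℝ) * 2 ≤ (bad'.card : ℝ) := by exact_mod_cast by omega
  have h2K : (2:ℝ)^(K+1) = 2 * 2^K := by ring
  rw [h2K] at hmain
  linarith

lemma rademacher_pm (k : ℕ) (t : ℝ) : rademacher k t = 1 ∨ rademacher k t = -1 := by
  unfold rademacher
  rcases Int.even_or_odd ⌊(2:ℝ)^k * t⌋ with h | h
  · exact Or.inl h.neg_one_zpow
  · exact Or.inr h.neg_one_zpow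

lemma prod_pm {ι : Type*} (s : Finset ι) (f : ι → ℝ) (h : ∀ i ∈ s, f i = 1 ∨ f i = -1) :
    (∏ i ∈ s, f i) = 1 ∨ (∏ i ∈ s, f i) = -1 := by
  classical
  induction s using Finset.induction_on with
  | empty => simp
  | @insert a s' hx ih =>
    rw [Finset.prod_insert hx]
    rcases h a (Finset.mem_insert_self a s') with h1 | h1 <;>
      rcases ih (fun i hi => h i (Finset.mem_insert_of_mem hi)) with h2 | h2 <;>
      simp [h1, h2]

lemma rademacher_eq_on_dyadic {M k i : ℕ} (hk : k ≤ M) (hi : i < 2^M) {u : ℝ}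
    (h1 : (i:ℝ)/2^M ≤ u) (h2 : u < ((i:ℝ)+1)/2^M) :
    rademacher k u = (-1:ℝ)^(i / 2^(M-k)) := by
  have hBpos : (0:ℝ) < 2^(M-k) := by positivity
  have hMpos : (0:ℝ) < 2^M := by positivity
  have hkpos : (0:ℝ) < 2^k := by positivity
  set qn : ℕ := i / 2^(M-k) with hq
  have hql : qn * 2^(M-k) ≤ i := Nat.div_mul_le_self i (2^(M-k))
  have hqu : i < (qn + 1) * 2^(M-k) := by
    have hbp := Nat.two_pow_pos (M-k)
    calc i = 2^(M-k) * (i/2^(M-k)) + i % 2^(M-k) := (Nat.div_add_mod i (2^(M-k))).symm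
    _ < 2^(M-k) * qn + 2^(M-k) := by have := Nat.mod_lt i hbp; rw [hq]; omega
    _ = (qn + 1) * 2^(M-k) := by ring
  have hpow : (2:ℝ)^(M-k) * 2^k = 2^M := by
    rw [← pow_add]; congr 1; omega
  have hfloor : ⌊(2:ℝ)^k * u⌋ = (qn : ℤ) := by
    rw [Int.floor_eq_iff]
    constructor
    · have hcast : (qn:ℝ) * 2^(M-k) ≤ i := by exact_mod_cast hql
      have hiu : (i:ℝ) ≤ 2^M * u := by
        rw [div_le_iff₀ hMpos] at h1; linarith [h1]
      push_cast
      nlinarith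
    · have hcast : (i:ℝ) + 1 ≤ ((qn:ℝ) + 1) * 2^(M-k) := by exact_mod_cast hqu
      have hiu : 2^M * u < (i:ℝ) + 1 := by
        rw [lt_div_iff₀ hMpos] at h2; linarith [h2]
      push_cast
      nlinarith
  unfold rademacher
  rw [hfloor, zpow_natCast]

end Stmt0Aux

open Stmt0Aux in
/-- tail estimate for the randomized chaos, uniform in `t`, via
Bernstein's inequality and a union bound over the `2^m` sign patterns. -/
theorem stmt0 (d : ℕ) (hd : 1 ≤ d) (A : Finset (Fin d → ℕ)) (hA : ↑A ⊆ Delta d)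
    (hN : 1 ≤ A.card) (S : Finset ℕ) (m : ℕ) (hS : S.card = m)
    (hcoord : ∀ j ∈ A, ∀ i, j i ∈ S)
    (π : (Fin d → ℕ) → ℕ) (hπ : Set.InjOn π ↑A)
    (lam : ℝ) (hlam : 0 < lam) :
    volume {u ∈ Set.Icc (0 : ℝ) 1 | ∃ t ∈ Set.Icc (0 : ℝ) 1,
        lam < |∑ j ∈ A, rademacher (π j) u * chaos j t|} ≤
      ENNReal.ofReal (2 ^ (m + 1) * Real.exp (-(lam ^ 2) / (2 * A.card))) := by
  classical
  set M : ℕ := A.sup π + 1 with hM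
  have hπle : ∀ j ∈ A, π j < M := fun j hj => by
    have := Finset.le_sup (f := π) hj; omega
  set q : (Fin d → ℕ) → ℕ := fun j => M - π j with hqdef
  have hqinj : Set.InjOn q ↑A := by
    intro x hx y hy hxy
    apply hπ hx hy
    have h1 := hπle x (by exact_mod_cast hx)
    have h2 := hπle y (by exact_mod_cast hy)
    simp only [hqdef] at hxy
    omega
  have hqle : ∀ j ∈ A, q j ≤ M := fun j hj => Nat.sub_le _ _
  set bad : Finset ℕ := (Finset.range (2^M)).filter
    (fun i => ∃ t ∈ Set.Icc (0:ℝ) 1, lam < |∑ j ∈ A, (-1:ℝ)^(i / 2^(q j)) * chaos j t|)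
    with hbad
  -- Step 1: the bad set of `u` is covered by dyadic intervals indexed by `bad`.
  have hZsub : {u ∈ Set.Icc (0:ℝ) 1 | ∃ t ∈ Set.Icc (0:ℝ) 1,
      lam < |∑ j ∈ A, rademacher (π j) u * chaos j t|}
      ⊆ (⋃ i ∈ bad, Set.Ico ((i:ℝ)/2^M) (((i:ℝ)+1)/2^M)) ∪ {(1:ℝ)} := by
    rintro u ⟨⟨hu0, hu1⟩, t, ht, hlt⟩
    rcases eq_or_lt_of_le hu1 with h1 | h1
    · exact Or.inr (by simp [h1])
    · left
      set i : ℕ := ⌊2^M * u⌋₊ with hi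
      have hMpos : (0:ℝ) < 2^M := by positivity
      have hiu : (i:ℝ) ≤ 2^M * u := Nat.floor_le (by positivity)
      have hiu2 : 2^M * u < (i:ℝ) + 1 := Nat.lt_floor_add_one _
      have hilt : i < 2^M := by
        have hx : (2:ℝ)^M * u < ((2^M : ℕ) : ℝ) := by push_cast; nlinarith
        exact Nat.floor_lt (by positivity) |>.mpr hx
      have hmem : u ∈ Set.Ico ((i:ℝ)/2^M) (((i:ℝ)+1)/2^M) :=
        ⟨by rw [div_le_iff₀ hMpos]; linarith, by rw [lt_div_iff₀ hMpos]; linarith⟩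
      have hibad : i ∈ bad := by
        rw [hbad, Finset.mem_filter]
        refine ⟨Finset.mem_range.mpr hilt, t, ht, ?_⟩
        have heq : ∑ j ∈ A, (-1:ℝ)^(i / 2^(q j)) * chaos j t
            = ∑ j ∈ A, rademacher (π j) u * chaos j t := by
          refine Finset.sum_congr rfl fun j hj => ?_
          congr 1
          exact (rademacher_eq_on_dyadic (hπle j hj).le hilt hmem.1 hmem.2).symm
        rw [heq]; exact hlt
      exact Set.mem_iUnion₂.mpr ⟨i, hibad, hmem⟩
  -- Step 2: measure bound via the covering.
  have hmeas : volume {u ∈ Set.Icc (0:ℝ) 1 | ∃ t ∈ Set.Icc (0:ℝ) 1,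
      lam < |∑ j ∈ A, rademacher (π j) u * chaos j t|}
      ≤ ENNReal.ofReal ((bad.card : ℝ) * (1/2^M)) := by
    calc volume {u ∈ Set.Icc (0:ℝ) 1 | ∃ t ∈ Set.Icc (0:ℝ) 1,
        lam < |∑ j ∈ A, rademacher (π j) u * chaos j t|}
        ≤ volume ((⋃ i ∈ bad, Set.Ico ((i:ℝ)/2^M) (((i:ℝ)+1)/2^M)) ∪ {(1:ℝ)}) :=
          measure_mono hZsub
    _ ≤ volume (⋃ i ∈ bad, Set.Ico ((i:ℝ)/2^M) (((i:ℝ)+1)/2^M)) + volume {(1:ℝ)} :=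
          measure_union_le _ _
    _ = volume (⋃ i ∈ bad, Set.Ico ((i:ℝ)/2^M) (((i:ℝ)+1)/2^M)) := by
          rw [Real.volume_singleton, add_zero]
    _ ≤ ∑ i ∈ bad, volume (Set.Ico ((i:ℝ)/2^M) (((i:ℝ)+1)/2^M)) :=
          measure_biUnion_finset_le _ _
    _ = ∑ _i ∈ bad, ENNReal.ofReal (1/2^M) := by
          refine Finset.sum_congr rfl fun i _ => ?_
          rw [Real.volume_Ico]
          congr 1
          rw [div_sub_div_same]
          ring_nf
    _ = ENNReal.ofReal ((bad.card : ℝ) * (1/2^M)) := by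
          rw [Finset.sum_const, nsmul_eq_mul, ← ENNReal.ofReal_natCast,
            ← ENNReal.ofReal_mul (Nat.cast_nonneg bad.card)]
  -- Step 3: cardinality bound via union over sign patterns and Chernoff.
  have hbadcard : (bad.card : ℝ) ≤ 2^m * (2^M * (2 * Real.exp (-(lam^2) / (2 * A.card)))) := by
    have hsub2 : bad ⊆ S.powerset.biUnion (fun T => (Finset.range (2^M)).filter
        (fun i => lam < |∑ j ∈ A,
          (∏ l, (if (j l) ∈ T then (-1:ℝ) else 1)) * (-1:ℝ)^(i / 2^(q j))|)) := by
      intro i hi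
      obtain ⟨hir, t, ht, hlt⟩ := Finset.mem_filter.mp hi
      set T : Finset ℕ := S.filter (fun k => rademacher k t = -1) with hT
      refine Finset.mem_biUnion.mpr ⟨T, Finset.mem_powerset.mpr (Finset.filter_subset _ _),
        Finset.mem_filter.mpr ⟨hir, ?_⟩⟩
      have hch : ∀ j ∈ A, chaos j t = ∏ l, (if (j l) ∈ T then (-1:ℝ) else 1) := by
        intro j hj
        unfold chaos
        refine Finset.prod_congr rfl fun l _ => ?_
        have hkS := hcoord j hj l
        rcases rademacher_pm (j l) t with h | h
        · rw [h, if_neg]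
          intro hmem
          rw [hT] at hmem
          have hcon := (Finset.mem_filter.mp hmem).2
          rw [h] at hcon
          norm_num at hcon
        · rw [h, if_pos]
          rw [hT]
          exact Finset.mem_filter.mpr ⟨hkS, h⟩
      have heq : ∑ j ∈ A, (∏ l, (if (j l) ∈ T then (-1:ℝ) else 1)) * (-1:ℝ)^(i / 2^(q j))
          = ∑ j ∈ A, (-1:ℝ)^(i / 2^(q j)) * chaos j t := by
        refine Finset.sum_congr rfl fun j hj => ?_
        rw [hch j hj, mul_comm]
      rw [heq]; exact hlt
    have hstep : ∀ T ∈ S.powerset,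
        ((((Finset.range (2^M)).filter (fun i => lam < |∑ j ∈ A,
          (∏ l, (if (j l) ∈ T then (-1:ℝ) else 1)) * (-1:ℝ)^(i / 2^(q j))|)).card : ℝ)
          ≤ 2^M * (2 * Real.exp (-(lam^2) / (2 * A.card)))) := by
      intro T _
      exact chernoff_main M A hN q hqinj hqle
        (fun j => ∏ l, (if (j l) ∈ T then (-1:ℝ) else 1))
        (fun j hj => prod_pm _ _ (fun l _ => by split <;> norm_num)) lam hlam
    calc (bad.card : ℝ)
        ≤ ((S.powerset.biUnion (fun T => (Finset.range (2^M)).filter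
          (fun i => lam < |∑ j ∈ A,
            (∏ l, (if (j l) ∈ T then (-1:ℝ) else 1)) * (-1:ℝ)^(i / 2^(q j))|))).card : ℝ) := by
          exact_mod_cast Finset.card_le_card hsub2
    _ ≤ ∑ T ∈ S.powerset, ((((Finset.range (2^M)).filter (fun i => lam < |∑ j ∈ A,
          (∏ l, (if (j l) ∈ T then (-1:ℝ) else 1)) * (-1:ℝ)^(i / 2^(q j))|)).card : ℝ)) := by
          exact_mod_cast Finset.card_biUnion_le
    _ ≤ ∑ _T ∈ S.powerset, (2^M * (2 * Real.exp (-(lam^2) / (2 * A.card)))) :=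
          Finset.sum_le_sum hstep
    _ = 2^m * (2^M * (2 * Real.exp (-(lam^2) / (2 * A.card)))) := by
          rw [Finset.sum_const, Finset.card_powerset, hS, nsmul_eq_mul]
          push_cast
          ring
  -- Conclusion.
  refine le_trans hmeas (ENNReal.ofReal_le_ofReal ?_)
  have h2M : (0:ℝ) < 2^M := by positivity
  have hfinal : (bad.card : ℝ) * (1/2^M)
      ≤ (2^m * (2^M * (2 * Real.exp (-(lam^2) / (2 * A.card))))) * (1/2^M) :=
    mul_le_mul_of_nonneg_right hbadcard (by positivity)
  calc (bad.card : ℝ) * (1/2^M) ≤ _ := hfinal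
  _ = 2^(m+1) * Real.exp (-(lam^2) / (2 * A.card)) := by
      field_simp
      ring
end

section
/- For every d ≥ 1 and every p with 2 ≤ p < ∞ there exists D > 0 (depending only on p) such that for every injection π : Δ^d → ℕ and every finitely supported family of reals (a_ȷ)_{ȷ∈Δ^d}: ∫₀¹ ‖Σ_{ȷ∈Δ^d} r_{π(ȷ)}(u)·a_ȷ·𝐫_ȷ‖_{L_p[0,1]} du ≤ D·‖Σ_{ȷ∈Δ^d} a_ȷ·𝐫_ȷ‖_{L_p[0,1]}; that is, the Rademacher chaos {𝐫_ȷ}_{ȷ∈Δ^d} is a RUC sequence in L_p[0,1] for 2 ≤ p < ∞. (Instance of the Corollary to Proposition 3.) -/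
open MeasureTheory

open Set

section Basic

lemma rad_values (j : ℕ) (t : ℝ) : rademacher j t = 1 ∨ rademacher j t = -1 := by
  rcases Int.even_or_odd ⌊(2 : ℝ) ^ j * t⌋ with h | h
  · exact Or.inl (h.neg_one_zpow)
  · exact Or.inr (h.neg_one_zpow)

lemma rad_sq (j : ℕ) (t : ℝ) : rademacher j t ^ 2 = 1 := by
  rcases rad_values j t with h | h <;> rw [h] <;> norm_num

lemma rad_abs (j : ℕ) (t : ℝ) : |rademacher j t| = 1 := by
  rcases rad_values j t with h | h <;> rw [h] <;> norm_num

lemma pm_pow_even {x : ℝ} (hx : x = 1 ∨ x = -1) {n : ℕ} (hn : Even n) : x ^ n = 1 := by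
  rcases hx with h | h <;> subst h
  · simp
  · exact hn.neg_one_pow

lemma pm_pow_odd {x : ℝ} (hx : x = 1 ∨ x = -1) {n : ℕ} (hn : Odd n) : x ^ n = x := by
  rcases hx with h | h <;> subst h
  · simp
  · exact hn.neg_one_pow

lemma measurable_rad (j : ℕ) : Measurable (rademacher j) := by
  have h1 : Measurable fun t : ℝ => ⌊(2 : ℝ) ^ j * t⌋ :=
    Int.measurable_floor.comp (measurable_const_mul _)
  exact (measurable_of_countable fun z : ℤ => ((-1 : ℝ) ^ z)).comp h1

instance probIcc : IsProbabilityMeasure (volume.restrict (Icc (0:ℝ) 1)) := by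
  constructor
  rw [Measure.restrict_apply_univ, Real.volume_Icc]
  norm_num

lemma intOn {f : ℝ → ℝ} (hm : Measurable f) {C : ℝ} (hb : ∀ t, |f t| ≤ C) {s : Set ℝ}
    (hs : volume s < ⊤) : IntegrableOn f s := by
  refine Integrable.mono' (g := fun _ => C) (integrableOn_const hs.ne)
    hm.aestronglyMeasurable ?_
  exact ae_of_all _ fun t => by simpa [Real.norm_eq_abs] using hb t

lemma intervalInt {f : ℝ → ℝ} (hm : Measurable f) {C : ℝ} (hb : ∀ t, |f t| ≤ C) (x y : ℝ) :
    IntervalIntegrable f volume x y :=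
  ⟨intOn hm hb measure_Ioc_lt_top, intOn hm hb measure_Ioc_lt_top⟩

lemma intIcc {f : ℝ → ℝ} (hm : Measurable f) {C : ℝ} (hb : ∀ t, |f t| ≤ C) :
    IntegrableOn f (Icc (0:ℝ) 1) :=
  intOn hm hb measure_Icc_lt_top

lemma integral_eq_of_constOn {f : ℝ → ℝ} {x y K : ℝ} (hxy : x ≤ y)
    (h : ∀ t ∈ Set.Ico x y, f t = K) : ∫ t in x..y, f t = K * (y - x) := by
  rw [intervalIntegral.integral_of_le hxy, integral_Ioc_eq_integral_Ioo,
    setIntegral_congr_fun measurableSet_Ioo (fun t ht => h t ⟨le_of_lt ht.1, ht.2⟩),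
    setIntegral_const, Real.volume_real_Ioo_of_le hxy, smul_eq_mul, mul_comm]

lemma integral_congr_Ico {f g : ℝ → ℝ} (h : ∀ t ∈ Ico (0:ℝ) 1, f t = g t) :
    ∫ t in Icc (0:ℝ) 1, f t = ∫ t in Icc (0:ℝ) 1, g t := by
  rw [integral_Icc_eq_integral_Ico, integral_Icc_eq_integral_Ico]
  exact setIntegral_congr_fun measurableSet_Ico h

lemma int_one : ∫ _ in Icc (0:ℝ) 1, (1:ℝ) = 1 := by
  simp

lemma rad_zero_on_Ico {t : ℝ} (ht : t ∈ Ico (0:ℝ) 1) : rademacher 0 t = 1 := by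
  have : ⌊(2 : ℝ) ^ 0 * t⌋ = 0 := by
    rw [pow_zero, one_mul, Int.floor_eq_zero_iff]
    exact ⟨ht.1, ht.2⟩
  rw [rademacher, this, zpow_zero]

end Basic

lemma floor_const {m N : ℕ} (hm : m ≤ N) (i : ℕ) {t : ℝ}
    (h1 : (i : ℝ) / 2 ^ N ≤ t) (h2 : t < ((i : ℝ) + 1) / 2 ^ N) :
    ⌊(2 : ℝ) ^ m * t⌋ = (i / 2 ^ (N - m) : ℕ) := by
  have hDpos : 0 < 2 ^ (N - m) := Nat.pow_pos (by norm_num)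
  set D := 2 ^ (N - m) with hD
  set q := i / D with hq
  have h3 := Nat.div_add_mod i D
  have h4 := Nat.mod_lt i hDpos
  have key1 : (q : ℝ) * D ≤ i := by exact_mod_cast Nat.div_mul_le_self i D
  have key2n : i + 1 ≤ (q + 1) * D := by
    have h5 : i < (q + 1) * D :=
      calc i = D * q + i % D := h3.symm
        _ < D * q + D := Nat.add_lt_add_left h4 _
        _ = (q + 1) * D := by ring
    omega
  have key2 : (i : ℝ) + 1 ≤ (q + 1) * D := by exact_mod_cast key2n
  have hNp : (2 : ℝ) ^ N = 2 ^ m * D := by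
    rw [hD]
    push_cast
    rw [← pow_add]
    congr 1
    omega
  have hDr : (0 : ℝ) < D := by exact_mod_cast hDpos
  have h2m : (0 : ℝ) < 2 ^ m := by positivity
  have h2N : (0 : ℝ) < 2 ^ N := by positivity
  have e1 : (i : ℝ) ≤ t * 2 ^ N := by rwa [div_le_iff₀ h2N] at h1
  have e2 : t * 2 ^ N < (i : ℝ) + 1 := by rwa [lt_div_iff₀ h2N] at h2
  rw [Int.floor_eq_iff]
  constructor
  · push_cast
    nlinarith
  · push_cast
    nlinarith

section Core

lemma meas_prod_rad {ι : Type*} (A : Finset ι) (ν : ι → ℕ) :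
    Measurable fun t => ∏ i ∈ A, rademacher (ν i) t :=
  Finset.measurable_prod A fun i _ => measurable_rad (ν i)

lemma abs_prod_rad {ι : Type*} (A : Finset ι) (ν : ι → ℕ) (t : ℝ) :
    |∏ i ∈ A, rademacher (ν i) t| = 1 := by
  rw [Finset.abs_prod]
  exact Finset.prod_eq_one fun i _ => rad_abs (ν i) t

lemma core (S : Finset ℕ) (hne : S.Nonempty) (hS1 : ∀ m ∈ S, 1 ≤ m) :
    ∫ t in Icc (0:ℝ) 1, ∏ m ∈ S, rademacher m t = 0 := by
  set M := S.max' hne with hMdef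
  have hMS : M ∈ S := S.max'_mem hne
  have hM1 : 1 ≤ M := hS1 _ hMS
  obtain ⟨N, hN⟩ : ∃ N, M = N + 1 := ⟨M - 1, by omega⟩
  set f : ℝ → ℝ := fun t => ∏ m ∈ S, rademacher m t with hf
  have hfm : Measurable f := meas_prod_rad S id
  have hfb : ∀ t, |f t| ≤ 1 := fun t => le_of_eq (abs_prod_rad S id t)
  have hii : ∀ x y : ℝ, IntervalIntegrable f volume x y := intervalInt hfm hfb
  set a : ℕ → ℝ := fun i => i / 2 ^ N with ha
  have h2N : (0:ℝ) < 2 ^ N := by positivity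
  have h2N1 : (0:ℝ) < 2 ^ (N + 1) := by positivity
  have key : ∀ i : ℕ, ∫ t in a i..a (i + 1), f t = 0 := by
    intro i
    set c : ℝ := (2 * (i:ℝ) + 1) / 2 ^ (N + 1) with hc
    have hlo : a i = (2 * (i:ℝ)) / 2 ^ (N + 1) := by
      rw [ha]; rw [pow_succ]; field_simp
    have hhi : a (i + 1) = (2 * (i:ℝ) + 2) / 2 ^ (N + 1) := by
      rw [ha]; rw [pow_succ]; push_cast; field_simp
    have hlc : a i ≤ c := by
      rw [hlo, hc]; exact (div_le_div_iff_of_pos_right h2N1).mpr (by linarith)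
    have hch : c ≤ a (i + 1) := by
      rw [hhi, hc]; exact (div_le_div_iff_of_pos_right h2N1).mpr (by linarith)
    have claim1 : ∀ t ∈ Ico (a i) c, f t
        = ∏ m ∈ S, ((-1:ℝ) ^ ((2 * i) / 2 ^ (N + 1 - m) : ℕ)) := by
      intro t ht
      refine Finset.prod_congr rfl fun m hm => ?_
      have hmM : m ≤ N + 1 := by have := S.le_max' m hm; omega
      have hfl : ⌊(2:ℝ) ^ m * t⌋ = ((2 * i) / 2 ^ (N + 1 - m) : ℕ) := by
        apply floor_const hmM
        · rw [show ((2 * i : ℕ) : ℝ) = 2 * (i:ℝ) by push_cast; ring, ← hlo]; exact ht.1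
        · rw [show ((2 * i : ℕ) : ℝ) = 2 * (i:ℝ) by push_cast; ring, ← hc]; exact ht.2
      rw [rademacher, hfl, zpow_natCast]
    have claim2 : ∀ t ∈ Ico c (a (i + 1)), f t
        = ∏ m ∈ S, ((-1:ℝ) ^ ((2 * i + 1) / 2 ^ (N + 1 - m) : ℕ)) := by
      intro t ht
      refine Finset.prod_congr rfl fun m hm => ?_
      have hmM : m ≤ N + 1 := by have := S.le_max' m hm; omega
      have hfl : ⌊(2:ℝ) ^ m * t⌋ = ((2 * i + 1) / 2 ^ (N + 1 - m) : ℕ) := by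
        apply floor_const hmM
        · rw [show ((2 * i + 1 : ℕ) : ℝ) = 2 * (i:ℝ) + 1 by push_cast; ring, ← hc]; exact ht.1
        · rw [show ((2 * i + 1 : ℕ) : ℝ) + 1 = 2 * (i:ℝ) + 2 by push_cast; ring, ← hhi]
          exact ht.2
      rw [rademacher, hfl, zpow_natCast]
    have I1 : ∫ t in a i..c, f t
        = (∏ m ∈ S, ((-1:ℝ) ^ ((2 * i) / 2 ^ (N + 1 - m) : ℕ))) * (c - a i) :=
      integral_eq_of_constOn hlc claim1
    have I2 : ∫ t in c..a (i + 1), f t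
        = (∏ m ∈ S, ((-1:ℝ) ^ ((2 * i + 1) / 2 ^ (N + 1 - m) : ℕ))) * (a (i + 1) - c) :=
      integral_eq_of_constOn hch claim2
    have hM0 : N + 1 - M = 0 := by omega
    have hPP : ∏ m ∈ S.erase M, ((-1:ℝ) ^ ((2 * i + 1) / 2 ^ (N + 1 - m) : ℕ))
        = ∏ m ∈ S.erase M, ((-1:ℝ) ^ ((2 * i) / 2 ^ (N + 1 - m) : ℕ)) := by
      refine Finset.prod_congr rfl fun m hm => ?_
      have hmS : m ∈ S := Finset.mem_of_mem_erase hm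
      have hne' : m ≠ M := Finset.ne_of_mem_erase hm
      have hmN : m ≤ N := by have := S.le_max' m hmS; omega
      obtain ⟨l, hl⟩ : ∃ l, N + 1 - m = l + 1 := ⟨N - m, by omega⟩
      congr 1
      rw [hl, pow_succ', ← Nat.div_div_eq_div_mul, ← Nat.div_div_eq_div_mul]
      congr 1
      omega
    have hK1 : ∏ m ∈ S, ((-1:ℝ) ^ ((2 * i) / 2 ^ (N + 1 - m) : ℕ))
        = (∏ m ∈ S.erase M, ((-1:ℝ) ^ ((2 * i) / 2 ^ (N + 1 - m) : ℕ))) * (-1) ^ (2 * i) := by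
      rw [← Finset.prod_erase_mul S _ hMS, hM0]
      norm_num
    have hK2 : ∏ m ∈ S, ((-1:ℝ) ^ ((2 * i + 1) / 2 ^ (N + 1 - m) : ℕ))
        = -(∏ m ∈ S, ((-1:ℝ) ^ ((2 * i) / 2 ^ (N + 1 - m) : ℕ))) := by
      rw [← Finset.prod_erase_mul S _ hMS, hM0, hPP, hK1, pow_zero, Nat.div_one, pow_succ]
      ring
    have hadd := intervalIntegral.integral_add_adjacent_intervals
      (hii (a i) c) (hii c (a (i + 1)))
    rw [I1, I2, hK2] at hadd
    rw [← hadd, hlo, hhi, hc]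
    ring
  have hsum := intervalIntegral.sum_integral_adjacent_intervals
    (a := a) (μ := volume) (f := f) (n := 2 ^ N) (fun k _ => hii _ _)
  have h0 : a 0 = 0 := by simp [ha]
  have h1' : a (2 ^ N) = 1 := by rw [ha]; push_cast; field_simp
  rw [MeasureTheory.integral_Icc_eq_integral_Ioc, ← intervalIntegral.integral_of_le zero_le_one]
  calc ∫ t in (0:ℝ)..1, f t = ∫ t in (a 0)..(a (2 ^ N)), f t := by rw [h0, h1']
    _ = ∑ k ∈ Finset.range (2 ^ N), ∫ t in a k..a (k + 1), f t := hsum.symm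
    _ = 0 := Finset.sum_eq_zero fun k _ => key k

end Core

section Mult

lemma prod_rad_reduce {ι : Type*} [DecidableEq ι] (A : Finset ι) (ν : ι → ℕ) (t : ℝ) :
    ∏ i ∈ A, rademacher (ν i) t
      = ∏ m ∈ (A.image ν).filter
          (fun m => ¬ Even ((A.filter (fun i => ν i = m)).card)), rademacher m t := by
  rw [Finset.prod_comp (fun m => rademacher m t) ν, Finset.prod_filter]
  refine Finset.prod_congr rfl fun m _ => ?_
  by_cases h : Even ((A.filter fun i => ν i = m).card)
  · simp only [h, not_true, if_false]
    exact pm_pow_even (rad_values m t) h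
  · simp only [h, not_false_iff, if_true]
    exact pm_pow_odd (rad_values m t) (Nat.not_even_iff_odd.mp h)

lemma mult_even {ι : Type*} [DecidableEq ι] (A : Finset ι) (ν : ι → ℕ)
    (h : ∀ m, 1 ≤ m → Even ((A.filter fun i => ν i = m).card)) :
    ∫ t in Icc (0:ℝ) 1, ∏ i ∈ A, rademacher (ν i) t = 1 := by
  rw [integral_congr_Ico (fun t _ => prod_rad_reduce A ν t)]
  have hT : (A.image ν).filter (fun m => ¬ Even ((A.filter (fun i => ν i = m)).card)) ⊆ {0} := by
    intro m hm
    rw [Finset.mem_filter] at hm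
    rw [Finset.mem_singleton]
    by_contra h0
    exact hm.2 (h m (Nat.one_le_iff_ne_zero.mpr h0))
  rcases Finset.subset_singleton_iff.mp hT with h0 | h0 <;> rw [h0]
  · simpa using int_one
  · rw [integral_congr_Ico (fun t ht => by
      rw [Finset.prod_singleton, rad_zero_on_Ico ht] : ∀ t ∈ Ico (0:ℝ) 1, _ = (1:ℝ))]
    exact int_one

lemma mult_odd {ι : Type*} [DecidableEq ι] (A : Finset ι) (ν : ι → ℕ) {m₀ : ℕ} (hm₀ : 1 ≤ m₀)
    (h : ¬ Even ((A.filter fun i => ν i = m₀).card)) :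
    ∫ t in Icc (0:ℝ) 1, ∏ i ∈ A, rademacher (ν i) t = 0 := by
  rw [integral_congr_Ico (fun t _ => prod_rad_reduce A ν t)]
  have hmT : m₀ ∈ (A.image ν).filter (fun m => ¬ Even ((A.filter (fun i => ν i = m)).card)) := by
    rw [Finset.mem_filter]
    refine ⟨?_, h⟩
    have hcard : (A.filter fun i => ν i = m₀).card ≠ 0 := fun hc => h (hc ▸ Even.zero)
    obtain ⟨i, hi⟩ := Finset.card_pos.mp (Nat.pos_of_ne_zero hcard)
    rw [Finset.mem_filter] at hi
    exact Finset.mem_image.mpr ⟨i, hi.1, hi.2⟩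
  set T := (A.image ν).filter (fun m => ¬ Even ((A.filter (fun i => ν i = m)).card)) with hTdef
  have hT'1 : ∀ m ∈ T.erase 0, 1 ≤ m :=
    fun m hm => Nat.one_le_iff_ne_zero.mpr (Finset.ne_of_mem_erase hm)
  have hT'ne : (T.erase 0).Nonempty := ⟨m₀, Finset.mem_erase.mpr ⟨by omega, hmT⟩⟩
  have step2 : ∫ t in Icc (0:ℝ) 1, ∏ m ∈ T, rademacher m t
      = ∫ t in Icc (0:ℝ) 1, ∏ m ∈ T.erase 0, rademacher m t := by
    by_cases h0 : 0 ∈ T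
    · refine integral_congr_Ico fun t ht => ?_
      rw [← Finset.mul_prod_erase T _ h0, rad_zero_on_Ico ht, one_mul]
    · rw [Finset.erase_eq_of_notMem h0]
  rw [step2]
  exact core _ hT'ne hT'1

lemma ortho {ι : Type*} [DecidableEq ι] (B : Finset ι) (m : ι → ℕ) (b : ι → ℝ) {M : ℕ}
    (hM : 1 ≤ M) (hnem : ∀ j ∈ B, m j ≠ M) (s : ℕ) :
    ∫ u in Icc (0:ℝ) 1, rademacher M u * (∑ j ∈ B, b j * rademacher (m j) u) ^ s = 0 := by
  have expand : ∀ u : ℝ, rademacher M u * (∑ j ∈ B, b j * rademacher (m j) u) ^ s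
      = ∑ g ∈ Fintype.piFinset (fun _ : Fin s => B),
          (∏ i, b (g i)) * ∏ i : Fin (s + 1),
            rademacher ((Fin.cons M (fun i => m (g i)) : Fin (s+1) → ℕ) i) u := by
    intro u
    have h1 : (∑ j ∈ B, b j * rademacher (m j) u) ^ s
        = ∑ g ∈ Fintype.piFinset (fun _ : Fin s => B),
            ∏ i, (b (g i) * rademacher (m (g i)) u) := by
      rw [← Finset.prod_univ_sum (fun _ : Fin s => B)
        (fun _ j => b j * rademacher (m j) u), Finset.prod_const, Finset.card_univ,
        Fintype.card_fin]
    rw [h1, Finset.mul_sum]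
    refine Finset.sum_congr rfl fun g _ => ?_
    rw [Finset.prod_mul_distrib, Fin.prod_univ_succ, Fin.cons_zero]
    simp only [Fin.cons_succ]
    ring
  simp only [expand]
  rw [MeasureTheory.integral_finset_sum _ (fun g _ =>
    (intIcc (meas_prod_rad _ _) (fun t => le_of_eq (abs_prod_rad _ _ t))).const_mul _)]
  refine Finset.sum_eq_zero fun g hg => ?_
  rw [MeasureTheory.integral_const_mul]
  have hfilter : (Finset.univ.filter
      fun i : Fin (s + 1) => (Fin.cons M (fun i => m (g i)) : Fin (s+1) → ℕ) i = M) = {0} := by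
    ext i
    simp only [Finset.mem_filter, Finset.mem_univ, true_and, Finset.mem_singleton]
    constructor
    · intro hv
      by_contra hi0
      obtain ⟨j, rfl⟩ := Fin.eq_succ_of_ne_zero hi0
      rw [Fin.cons_succ] at hv
      exact hnem _ (Fintype.mem_piFinset.mp hg j) hv
    · rintro rfl
      simp
  rw [mult_odd Finset.univ _ hM (by rw [hfilter]; simp), mul_zero]

end Mult

section Moment

lemma measurable_radsum {ι : Type*} (B : Finset ι) (m : ι → ℕ) (b : ι → ℝ) :
    Measurable fun u => ∑ j ∈ B, b j * rademacher (m j) u :=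
  Finset.measurable_sum B fun j _ => (measurable_rad (m j)).const_mul (b j)

lemma abs_radsum_le {ι : Type*} (B : Finset ι) (m : ι → ℕ) (b : ι → ℝ) (u : ℝ) :
    |∑ j ∈ B, b j * rademacher (m j) u| ≤ ∑ j ∈ B, |b j| :=
  (Finset.abs_sum_le_sum_abs _ _).trans (le_of_eq (Finset.sum_congr rfl fun j _ => by
    rw [abs_mul, rad_abs, mul_one]))

lemma NL (k l : ℕ) (hl : l ≤ k) :
    (2 * k).choose (2 * l) * (2 * (k - l)).factorial ≤ (2 * k).factorial * k.choose l := by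
  have h1 : (2 * k).choose (2 * l) * ((2 * l).factorial * (2 * (k - l)).factorial)
      = (2 * k).factorial := by
    have h := Nat.choose_mul_factorial_mul_factorial (show 2 * l ≤ 2 * k by omega)
    rw [show 2 * k - 2 * l = 2 * (k - l) by omega] at h
    rw [← h]; ring
  calc (2 * k).choose (2 * l) * (2 * (k - l)).factorial
      ≤ (2 * k).choose (2 * l) * ((2 * l).factorial * (2 * (k - l)).factorial) := by
        have := Nat.factorial_pos (2 * l)
        exact Nat.mul_le_mul_left _ (Nat.le_mul_of_pos_left _ this)
    _ = (2 * k).factorial := h1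
    _ ≤ (2 * k).factorial * k.choose l :=
        Nat.le_mul_of_pos_right _ (Nat.choose_pos hl)

lemma moment {ι : Type*} [DecidableEq ι] :
    ∀ (n : ℕ) (B : Finset ι), B.card = n → ∀ (m : ι → ℕ), Set.InjOn m ↑B →
      ∀ (b : ι → ℝ) (k : ℕ),
    ∫ u in Icc (0:ℝ) 1, (∑ j ∈ B, b j * rademacher (m j) u) ^ (2 * k)
      ≤ ((2 * k).factorial : ℝ) * (∑ j ∈ B, b j ^ 2) ^ k := by
  intro n
  induction n with
  | zero =>
    intro B hB m _ b k
    rw [Finset.card_eq_zero.mp hB]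
    simp only [Finset.sum_empty]
    cases k with
    | zero =>
      simp only [Nat.mul_zero, pow_zero, Nat.factorial_zero, Nat.cast_one, one_mul]
      simp
    | succ k =>
      rw [zero_pow (by omega), zero_pow (by omega)]
      simp
  | succ n IH =>
    intro B hB m hinj b k
    by_cases hex : ∃ j₀ ∈ B, 1 ≤ m j₀
    · obtain ⟨j₀, hj₀B, hMj₀⟩ := hex
      have hB' : (B.erase j₀).card = n := by
        rw [Finset.card_erase_of_mem hj₀B, hB]
        omega
      have hinj' : Set.InjOn m ↑(B.erase j₀) :=
        hinj.mono (by exact_mod_cast Finset.erase_subset _ _)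
      have hnem : ∀ j ∈ B.erase j₀, m j ≠ m j₀ := fun j hj h =>
        (Finset.ne_of_mem_erase hj) (hinj (Finset.mem_of_mem_erase hj) hj₀B h)
      have hexpand : ∀ u : ℝ, (∑ j ∈ B, b j * rademacher (m j) u) ^ (2 * k)
          = ∑ i ∈ Finset.range (2 * k + 1),
              (b j₀ ^ i * ((2 * k).choose i : ℝ)) *
                (rademacher (m j₀) u ^ i *
                  (∑ j ∈ B.erase j₀, b j * rademacher (m j) u) ^ (2 * k - i)) := by
        intro u
        rw [← Finset.add_sum_erase _ _ hj₀B, add_pow]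
        refine Finset.sum_congr rfl fun i _ => ?_
        ring
      have hintg : ∀ i : ℕ, IntegrableOn
          (fun u => rademacher (m j₀) u ^ i *
            (∑ j ∈ B.erase j₀, b j * rademacher (m j) u) ^ (2 * k - i))
          (Icc (0:ℝ) 1) volume := by
        intro i
        refine intIcc (((measurable_rad _).pow_const i).mul
          ((measurable_radsum _ m b).pow_const _))
          (C := (∑ j ∈ B.erase j₀, |b j|) ^ (2 * k - i)) fun u => ?_
        rw [abs_mul, abs_pow, abs_pow, rad_abs, one_pow, one_mul]
        exact pow_le_pow_left₀ (abs_nonneg _) (abs_radsum_le _ m b u) _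
      have main : ∫ u in Icc (0:ℝ) 1, (∑ j ∈ B, b j * rademacher (m j) u) ^ (2 * k)
          = ∑ i ∈ Finset.range (2 * k + 1),
              (b j₀ ^ i * ((2 * k).choose i : ℝ)) *
                ∫ u in Icc (0:ℝ) 1, rademacher (m j₀) u ^ i *
                  (∑ j ∈ B.erase j₀, b j * rademacher (m j) u) ^ (2 * k - i) := by
        simp only [hexpand]
        rw [MeasureTheory.integral_finset_sum _ (fun i _ => ((hintg i).const_mul _))]
        exact Finset.sum_congr rfl fun i _ => MeasureTheory.integral_const_mul _ _
      have hodd : ∀ i : ℕ, Odd i →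
          (∫ u in Icc (0:ℝ) 1, rademacher (m j₀) u ^ i *
            (∑ j ∈ B.erase j₀, b j * rademacher (m j) u) ^ (2 * k - i)) = 0 := by
        intro i hi
        have hcongr : ∫ u in Icc (0:ℝ) 1, rademacher (m j₀) u ^ i *
              (∑ j ∈ B.erase j₀, b j * rademacher (m j) u) ^ (2 * k - i)
            = ∫ u in Icc (0:ℝ) 1, rademacher (m j₀) u *
              (∑ j ∈ B.erase j₀, b j * rademacher (m j) u) ^ (2 * k - i) :=
          integral_congr_Ico fun u _ => by rw [pm_pow_odd (rad_values _ _) hi]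
        rw [hcongr]
        exact ortho _ m b hMj₀ hnem _
      have hJ : ∀ l : ℕ, (∫ u in Icc (0:ℝ) 1, rademacher (m j₀) u ^ (2 * l) *
            (∑ j ∈ B.erase j₀, b j * rademacher (m j) u) ^ (2 * k - 2 * l))
          = ∫ u in Icc (0:ℝ) 1,
              (∑ j ∈ B.erase j₀, b j * rademacher (m j) u) ^ (2 * (k - l)) := by
        intro l
        rw [show 2 * k - 2 * l = 2 * (k - l) by omega]
        exact integral_congr_Ico fun u _ => by
          rw [pm_pow_even (rad_values _ _) (even_two_mul l), one_mul]
      rw [main, ← Finset.sum_filter_add_sum_filter_not (Finset.range (2 * k + 1)) Even]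
      have hodd0 : ∑ i ∈ (Finset.range (2 * k + 1)).filter (fun i => ¬ Even i),
          (b j₀ ^ i * ((2 * k).choose i : ℝ)) *
            ∫ u in Icc (0:ℝ) 1, rademacher (m j₀) u ^ i *
              (∑ j ∈ B.erase j₀, b j * rademacher (m j) u) ^ (2 * k - i) = 0 :=
        Finset.sum_eq_zero fun i hi => by
          rw [hodd i (Nat.not_even_iff_odd.mp (Finset.mem_filter.mp hi).2), mul_zero]
      have himg : (Finset.range (2 * k + 1)).filter Even
          = (Finset.range (k + 1)).image (fun l => 2 * l) := by
        ext i
        simp only [Finset.mem_filter, Finset.mem_range, Finset.mem_image, Nat.even_iff]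
        constructor
        · rintro ⟨h1, h2⟩
          exact ⟨i / 2, by omega, by omega⟩
        · rintro ⟨l, hl, rfl⟩
          omega
      rw [hodd0, add_zero, himg, Finset.sum_image (fun x _ y _ h => by omega)]
      have hS'nn : (0:ℝ) ≤ ∑ j ∈ B.erase j₀, b j ^ 2 :=
        Finset.sum_nonneg fun _ _ => sq_nonneg _
      have perterm : ∀ l ∈ Finset.range (k + 1),
          (b j₀ ^ (2 * l) * ((2 * k).choose (2 * l) : ℝ)) *
            (∫ u in Icc (0:ℝ) 1, rademacher (m j₀) u ^ (2 * l) *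
              (∑ j ∈ B.erase j₀, b j * rademacher (m j) u) ^ (2 * k - 2 * l))
          ≤ ((2 * k).factorial : ℝ) * (k.choose l : ℝ) * (b j₀ ^ 2) ^ l *
              (∑ j ∈ B.erase j₀, b j ^ 2) ^ (k - l) := by
        intro l hl
        have hlk : l ≤ k := by
          have := Finset.mem_range.mp hl
          omega
        have hIH := IH (B.erase j₀) hB' m hinj' b (k - l)
        have hch : ((2 * k).choose (2 * l) : ℝ) * ((2 * (k - l)).factorial : ℝ)
            ≤ ((2 * k).factorial : ℝ) * (k.choose l : ℝ) := by
          exact_mod_cast NL k l hlk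
        have e1 : b j₀ ^ (2 * l) = (b j₀ ^ 2) ^ l := by rw [pow_mul]
        rw [hJ l, e1]
        calc (b j₀ ^ 2) ^ l * ((2 * k).choose (2 * l) : ℝ) *
              (∫ u in Icc (0:ℝ) 1,
                (∑ j ∈ B.erase j₀, b j * rademacher (m j) u) ^ (2 * (k - l)))
            ≤ (b j₀ ^ 2) ^ l * ((2 * k).choose (2 * l) : ℝ) *
              (((2 * (k - l)).factorial : ℝ) * (∑ j ∈ B.erase j₀, b j ^ 2) ^ (k - l)) := by
              apply mul_le_mul_of_nonneg_left hIH (by positivity)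
          _ = ((b j₀ ^ 2) ^ l * (∑ j ∈ B.erase j₀, b j ^ 2) ^ (k - l)) *
              (((2 * k).choose (2 * l) : ℝ) * ((2 * (k - l)).factorial : ℝ)) := by ring
          _ ≤ ((b j₀ ^ 2) ^ l * (∑ j ∈ B.erase j₀, b j ^ 2) ^ (k - l)) *
              (((2 * k).factorial : ℝ) * (k.choose l : ℝ)) := by
              apply mul_le_mul_of_nonneg_left hch (by positivity)
          _ = ((2 * k).factorial : ℝ) * (k.choose l : ℝ) * (b j₀ ^ 2) ^ l *
              (∑ j ∈ B.erase j₀, b j ^ 2) ^ (k - l) := by ring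
      refine le_trans (Finset.sum_le_sum perterm) (le_of_eq ?_)
      have hSB : ∑ j ∈ B, b j ^ 2 = b j₀ ^ 2 + ∑ j ∈ B.erase j₀, b j ^ 2 :=
        (Finset.add_sum_erase _ _ hj₀B).symm
      rw [hSB, add_pow, Finset.mul_sum]
      exact Finset.sum_congr rfl fun l _ => by ring
    · push_neg at hex
      have hall : ∀ j ∈ B, m j = 0 := fun j hj => by
        have := hex j hj
        omega
      have hcard1 : B.card ≤ 1 := by
        by_contra hc
        obtain ⟨x, hx, y, hy, hxy⟩ := Finset.one_lt_card.mp (lt_of_not_ge hc)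
        exact hxy (hinj hx hy (by rw [hall x hx, hall y hy]))
      obtain ⟨x, hx⟩ := Finset.card_eq_one.mp (by omega : B.card = 1)
      rw [hx]
      simp only [Finset.sum_singleton]
      have hpt : ∀ u : ℝ, (b x * rademacher (m x) u) ^ (2 * k) = ((b x) ^ 2) ^ k := by
        intro u
        rw [mul_pow, pow_mul, pow_mul, rad_sq, one_pow, mul_one]
      rw [integral_congr_Ico (fun u _ => hpt u)]
      have hc1 : ∫ _ in Icc (0:ℝ) 1, ((b x ^ 2) ^ k : ℝ) = (b x ^ 2) ^ k := by simp
      rw [hc1]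
      have hfac : (1:ℝ) ≤ ((2 * k).factorial : ℝ) := by
        exact_mod_cast Nat.one_le_iff_ne_zero.mpr (Nat.factorial_ne_zero _)
      nlinarith [pow_nonneg (sq_nonneg (b x)) k]

end Moment

section Chaos

variable {d : ℕ}

lemma measurable_chaos (j : Fin d → ℕ) : Measurable (chaos j) :=
  meas_prod_rad Finset.univ j

lemma chaos_abs (j : Fin d → ℕ) (t : ℝ) : |chaos j t| = 1 :=
  abs_prod_rad Finset.univ j t

lemma chaos_sq (j : Fin d → ℕ) (t : ℝ) : chaos j t ^ 2 = 1 := by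
  rw [chaos, ← Finset.prod_pow]
  exact Finset.prod_eq_one fun i _ => rad_sq (j i) t

lemma chaos_image {j : Fin d → ℕ} (hj : Function.Injective j) (t : ℝ) :
    chaos j t = ∏ m ∈ Finset.image j Finset.univ, rademacher m t := by
  rw [chaos, Finset.prod_image (fun x _ y _ h => hj h)]

lemma chaos_mul {j k : Fin d → ℕ} (hj : Function.Injective j) (hk : Function.Injective k)
    (t : ℝ) : chaos j t * chaos k t
      = ∏ m ∈ symmDiff (Finset.image j Finset.univ) (Finset.image k Finset.univ),
          rademacher m t := by
  rw [chaos_image hj, chaos_image hk]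
  set s := Finset.image j Finset.univ
  set s' := Finset.image k Finset.univ
  have h1 : (∏ m ∈ s ∪ s', rademacher m t) * ∏ m ∈ s ∩ s', rademacher m t
      = (∏ m ∈ s, rademacher m t) * ∏ m ∈ s', rademacher m t :=
    Finset.prod_union_inter
  have h2 : s ∪ s' = symmDiff s s' ∪ (s ∩ s') := by
    rw [← Finset.sup_eq_union, ← Finset.inf_eq_inter]
    exact (symmDiff_sup_inf s s').symm
  have h3 : Disjoint (symmDiff s s') (s ∩ s') := disjoint_symmDiff_inf s s'
  rw [← h1, h2, Finset.prod_union h3, mul_assoc, ← Finset.prod_mul_distrib]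
  have h4 : ∏ m ∈ s ∩ s', rademacher m t * rademacher m t = 1 :=
    Finset.prod_eq_one fun m _ => by rw [← sq, rad_sq]
  rw [h4, mul_one]

lemma strictAnti_ext {j k : Fin d → ℕ} (hj : StrictAnti j) (hk : StrictAnti k)
    (h : Finset.image j Finset.univ = Finset.image k Finset.univ) : j = k := by
  have hcard : (Finset.image j Finset.univ).card = d := by
    rw [Finset.card_image_of_injective _ hj.injective, Finset.card_univ, Fintype.card_fin]
  have hjm : StrictMono (j ∘ Fin.rev) := fun x y hxy => hj (Fin.rev_lt_rev.mpr hxy)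
  have hkm : StrictMono (k ∘ Fin.rev) := fun x y hxy => hk (Fin.rev_lt_rev.mpr hxy)
  have h1 := Finset.orderEmbOfFin_unique hcard (f := j ∘ Fin.rev)
    (fun x => Finset.mem_image_of_mem _ (Finset.mem_univ _)) hjm
  have h2 := Finset.orderEmbOfFin_unique hcard (f := k ∘ Fin.rev)
    (fun x => by rw [h]; exact Finset.mem_image_of_mem _ (Finset.mem_univ _)) hkm
  funext i
  have h3 := congrFun (h1.trans h2.symm) (Fin.rev i)
  simpa [Fin.rev_rev] using h3

lemma chaos_ortho {j k : Fin d → ℕ} (hjD : j ∈ Delta d) (hkD : k ∈ Delta d) (hne : j ≠ k) :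
    ∫ t in Icc (0:ℝ) 1, chaos j t * chaos k t = 0 := by
  have hcongr : ∫ t in Icc (0:ℝ) 1, chaos j t * chaos k t
      = ∫ t in Icc (0:ℝ) 1, ∏ m ∈ symmDiff (Finset.image j Finset.univ)
          (Finset.image k Finset.univ), rademacher m t :=
    integral_congr_Ico fun t _ => chaos_mul hjD.1.injective hkD.1.injective t
  rw [hcongr]
  apply core
  · rw [Finset.nonempty_iff_ne_empty]
    intro hemp
    exact hne (strictAnti_ext hjD.1 hkD.1 (by
      have := symmDiff_eq_bot.mp hemp
      exact this))
  · intro m hm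
    have hm' : m ∈ Finset.image j Finset.univ ∪ Finset.image k Finset.univ := by
      rcases Finset.mem_symmDiff.mp hm with ⟨h1, _⟩ | ⟨h1, _⟩
      · exact Finset.mem_union_left _ h1
      · exact Finset.mem_union_right _ h1
    rcases Finset.mem_union.mp hm' with h1 | h1
    · obtain ⟨i, _, rfl⟩ := Finset.mem_image.mp h1
      exact hjD.2 i
    · obtain ⟨i, _, rfl⟩ := Finset.mem_image.mp h1
      exact hkD.2 i

lemma chaos_L2 (A : Finset (Fin d → ℕ)) (hA : ↑A ⊆ Delta d) (a : (Fin d → ℕ) → ℝ) :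
    ∫ t in Icc (0:ℝ) 1, (∑ j ∈ A, a j * chaos j t) ^ 2 = ∑ j ∈ A, a j ^ 2 := by
  have hpt : ∀ t : ℝ, (∑ j ∈ A, a j * chaos j t) ^ 2
      = ∑ j ∈ A, ∑ k ∈ A, (a j * a k) * (chaos j t * chaos k t) := by
    intro t
    rw [sq, Finset.sum_mul_sum]
    exact Finset.sum_congr rfl fun j _ => Finset.sum_congr rfl fun k _ => by ring
  simp only [hpt]
  have hint : ∀ (j k : Fin d → ℕ), IntegrableOn
      (fun t => (a j * a k) * (chaos j t * chaos k t)) (Icc (0:ℝ) 1) volume :=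
    fun j k => (intIcc ((measurable_chaos j).mul (measurable_chaos k)) (C := 1)
      (fun t => by rw [Pi.mul_apply, abs_mul, chaos_abs, chaos_abs, mul_one])).const_mul _
  rw [MeasureTheory.integral_finset_sum _ (fun j _ =>
    MeasureTheory.integrable_finset_sum _ (fun k _ => hint j k))]
  have hjj : ∀ j ∈ A, ∑ k ∈ A,
      (∫ t in Icc (0:ℝ) 1, (a j * a k) * (chaos j t * chaos k t)) = a j ^ 2 := by
    intro j hj
    have hsw : ∀ k ∈ A, (∫ t in Icc (0:ℝ) 1, (a j * a k) * (chaos j t * chaos k t))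
        = (a j * a k) * ∫ t in Icc (0:ℝ) 1, chaos j t * chaos k t :=
      fun k _ => MeasureTheory.integral_const_mul _ _
    rw [Finset.sum_congr rfl hsw]
    rw [Finset.sum_eq_single j
      (fun k hk hkj => by
        rw [chaos_ortho (hA hj) (hA hk) (Ne.symm hkj), mul_zero])
      (fun hnj => absurd hj hnj)]
    have hd : ∫ t in Icc (0:ℝ) 1, chaos j t * chaos j t = 1 := by
      rw [integral_congr_Ico (fun t _ => by rw [← sq, chaos_sq j t] :
        ∀ t ∈ Ico (0:ℝ) 1, chaos j t * chaos j t = (1:ℝ))]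
      exact int_one
    rw [hd, mul_one, sq]
  rw [Finset.sum_congr rfl (fun j hj => by
    rw [MeasureTheory.integral_finset_sum _ (fun k _ => hint j k), hjj j hj])]

end Chaos

section Glue

lemma meas_rpow {α : Type*} [MeasurableSpace α] {f : α → ℝ} (hf : Measurable f) {q : ℝ}
    (hq : 0 ≤ q) : Measurable fun x => f x ^ q :=
  (Real.continuous_rpow_const hq).measurable.comp hf

lemma mono_int {g : ℝ → ℝ} (hg : Measurable g) (hnn : ∀ u, 0 ≤ g u) {C : ℝ}
    (hb : ∀ u, g u ≤ C) {e : ℝ} (he : 1 ≤ e) :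
    ∫ u in Icc (0:ℝ) 1, g u ≤ (∫ u in Icc (0:ℝ) 1, g u ^ e) ^ (1 / e) := by
  rcases eq_or_lt_of_le he with heq | hlt
  · rw [← heq]
    simp [Real.rpow_one]
  · have hpq : Real.HolderConjugate e (Real.conjExponent e) :=
      Real.HolderConjugate.conjExponent hlt
    have hmem1 : MemLp g (ENNReal.ofReal e) (volume.restrict (Icc (0:ℝ) 1)) :=
      MemLp.of_bound hg.aestronglyMeasurable C (ae_of_all _ fun u => by
        rw [Real.norm_eq_abs, abs_of_nonneg (hnn u)]; exact hb u)
    have hmem2 : MemLp (fun _ : ℝ => (1:ℝ)) (ENNReal.ofReal (Real.conjExponent e))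
        (volume.restrict (Icc (0:ℝ) 1)) := memLp_const 1
    have h := MeasureTheory.integral_mul_le_Lp_mul_Lq_of_nonneg hpq
      (ae_of_all _ hnn) (ae_of_all _ fun _ => zero_le_one) hmem1 hmem2
    simp only [mul_one, Real.one_rpow, MeasureTheory.integral_const, measure_univ,
      ENNReal.toReal_one, one_smul, smul_eq_mul, probReal_univ, Real.one_rpow] at h
    exact h

end Glue

section Chain

lemma chain {F : ℝ → ℝ → ℝ} (hFP : Measurable fun q : ℝ × ℝ => F q.1 q.2)
    {T : ℝ} (hT : ∀ u t, |F u t| ≤ T) {p : ℝ} (hp1 : 1 ≤ p) {K : ℝ}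
    (hkey : ∀ t : ℝ, (∫ u in Icc (0:ℝ) 1, |F u t| ^ p) ≤ K) :
    ∫ u in Icc (0:ℝ) 1, (∫ t in Icc (0:ℝ) 1, |F u t| ^ p) ^ (1/p) ≤ K ^ (1/p) := by
  have hp0 : 0 < p := lt_of_lt_of_le one_pos hp1
  have hpne : p ≠ 0 := ne_of_gt hp0
  have hmu : ∀ u, Measurable fun t => F u t := fun u => hFP.comp measurable_prodMk_left
  have hmt : ∀ t, Measurable fun u => F u t := fun t => hFP.comp measurable_prodMk_right
  have hGP : Measurable fun q : ℝ × ℝ => |F q.1 q.2| ^ p := meas_rpow hFP.abs hp0.le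
  have hKnn : 0 ≤ K :=
    le_trans (integral_nonneg fun u => Real.rpow_nonneg (abs_nonneg _) _) (hkey 0)
  have hInn : ∀ u, 0 ≤ ∫ t in Icc (0:ℝ) 1, |F u t| ^ p :=
    fun u => integral_nonneg fun t => Real.rpow_nonneg (abs_nonneg _) _
  have hinnb : ∀ u, ∀ t : ℝ, |F u t| ^ p ≤ T ^ p :=
    fun u t => Real.rpow_le_rpow (abs_nonneg _) (hT u t) hp0.le
  have hintu : ∀ u, IntegrableOn (fun t => |F u t| ^ p) (Icc (0:ℝ) 1) volume :=
    fun u => intIcc (meas_rpow (hmu u).abs hp0.le) (C := T ^ p) fun t => by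
      rw [abs_of_nonneg (Real.rpow_nonneg (abs_nonneg _) _)]
      exact hinnb u t
  have hintt : ∀ t, IntegrableOn (fun u => |F u t| ^ p) (Icc (0:ℝ) 1) volume :=
    fun t => intIcc (meas_rpow (hmt t).abs hp0.le) (C := T ^ p) fun u => by
      rw [abs_of_nonneg (Real.rpow_nonneg (abs_nonneg _) _)]
      exact hinnb u t
  have hIb : ∀ u, (∫ t in Icc (0:ℝ) 1, |F u t| ^ p) ≤ T ^ p := by
    intro u
    calc ∫ t in Icc (0:ℝ) 1, |F u t| ^ p ≤ ∫ _ in Icc (0:ℝ) 1, T ^ p :=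
          integral_mono (hintu u) (integrable_const _) (hinnb u)
      _ = T ^ p := by simp
  have hImeas : StronglyMeasurable fun u => ∫ t in Icc (0:ℝ) 1, |F u t| ^ p :=
    hGP.stronglyMeasurable.integral_prod_right'
  have hgm : Measurable fun u => (∫ t in Icc (0:ℝ) 1, |F u t| ^ p) ^ (1/p) :=
    meas_rpow hImeas.measurable (by positivity)
  have h1 := mono_int hgm (fun u => Real.rpow_nonneg (hInn u) _)
    (C := (T ^ p) ^ (1/p))
    (fun u => Real.rpow_le_rpow (hInn u) (hIb u) (by positivity)) hp1
  have hcan : ∀ u : ℝ, ((∫ t in Icc (0:ℝ) 1, |F u t| ^ p) ^ (1/p)) ^ p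
      = ∫ t in Icc (0:ℝ) 1, |F u t| ^ p := by
    intro u
    rw [← Real.rpow_mul (hInn u), one_div, inv_mul_cancel₀ hpne, Real.rpow_one]
  have hPb : Integrable (fun q : ℝ × ℝ => |F q.1 q.2| ^ p)
      ((volume.restrict (Icc (0:ℝ) 1)).prod (volume.restrict (Icc (0:ℝ) 1))) := by
    refine Integrable.mono' (integrable_const (T ^ p)) hGP.aestronglyMeasurable
      (ae_of_all _ fun q => ?_)
    rw [Real.norm_eq_abs, abs_of_nonneg (Real.rpow_nonneg (abs_nonneg _) _)]
    exact hinnb q.1 q.2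
  have hswap : (∫ u in Icc (0:ℝ) 1, ∫ t in Icc (0:ℝ) 1, |F u t| ^ p)
      = ∫ t in Icc (0:ℝ) 1, ∫ u in Icc (0:ℝ) 1, |F u t| ^ p :=
    MeasureTheory.integral_integral_swap hPb
  have hJmeas : StronglyMeasurable fun t => ∫ u in Icc (0:ℝ) 1, |F u t| ^ p := by
    have : Measurable fun q : ℝ × ℝ => |F q.2 q.1| ^ p :=
      meas_rpow (hFP.comp measurable_swap).abs hp0.le
    exact this.stronglyMeasurable.integral_prod_right'
  have hIle : (∫ u in Icc (0:ℝ) 1, ∫ t in Icc (0:ℝ) 1, |F u t| ^ p) ≤ K := by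
    rw [hswap]
    have hint2 : IntegrableOn (fun t => ∫ u in Icc (0:ℝ) 1, |F u t| ^ p)
        (Icc (0:ℝ) 1) volume := by
      refine intIcc hJmeas.measurable (C := T ^ p) fun t => ?_
      rw [abs_of_nonneg (integral_nonneg fun u => Real.rpow_nonneg (abs_nonneg _) _)]
      calc ∫ u in Icc (0:ℝ) 1, |F u t| ^ p ≤ ∫ _ in Icc (0:ℝ) 1, T ^ p :=
            integral_mono (hintt t) (integrable_const _) (fun u => hinnb u t)
        _ = T ^ p := by simp
    calc ∫ t in Icc (0:ℝ) 1, ∫ u in Icc (0:ℝ) 1, |F u t| ^ p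
        ≤ ∫ _ in Icc (0:ℝ) 1, K := integral_mono hint2 (integrable_const _) hkey
      _ = K := by simp
  calc ∫ u in Icc (0:ℝ) 1, (∫ t in Icc (0:ℝ) 1, |F u t| ^ p) ^ (1/p)
      ≤ (∫ u in Icc (0:ℝ) 1, ((∫ t in Icc (0:ℝ) 1, |F u t| ^ p) ^ (1/p)) ^ p) ^ (1/p) := h1
    _ = (∫ u in Icc (0:ℝ) 1, ∫ t in Icc (0:ℝ) 1, |F u t| ^ p) ^ (1/p) := by
        congr 1
        simp only [hcan]
    _ ≤ K ^ (1/p) := by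
        refine Real.rpow_le_rpow ?_ hIle (by positivity)
        rw [hswap]
        exact integral_nonneg fun t => integral_nonneg fun u =>
          Real.rpow_nonneg (abs_nonneg _) _

end Chain

lemma main_est {d : ℕ} {p : ℝ} (hp : 2 ≤ p) {k : ℕ} (hk1 : 1 ≤ k) (hp2k : p ≤ 2 * (k:ℝ))
    (π : (Fin d → ℕ) → ℕ) (hπ : Set.InjOn π (Delta d)) (A : Finset (Fin d → ℕ))
    (hA : ↑A ⊆ Delta d) (a : (Fin d → ℕ) → ℝ) :
    ∫ u in Icc (0:ℝ) 1,
        LpNorm p (fun t => ∑ j ∈ A, rademacher (π j) u * a j * chaos j t)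
      ≤ ((2 * k).factorial : ℝ) ^ ((1:ℝ) / (2 * (k:ℝ))) *
          LpNorm p (fun t => ∑ j ∈ A, a j * chaos j t) := by
  have hp0 : (0:ℝ) < p := by linarith
  have hpne : p ≠ 0 := ne_of_gt hp0
  have hp1 : (1:ℝ) ≤ p := by linarith
  have hkR : (0:ℝ) < (k:ℝ) := by
    have h : (1:ℝ) ≤ (k:ℝ) := by exact_mod_cast hk1
    linarith
  have hkne : (k:ℝ) ≠ 0 := ne_of_gt hkR
  have hS : (0:ℝ) ≤ ∑ j ∈ A, a j ^ 2 := Finset.sum_nonneg fun _ _ => sq_nonneg _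
  have hfact : (0:ℝ) < ((2 * k).factorial : ℝ) := by exact_mod_cast Nat.factorial_pos _
  have hmeasP : Measurable fun q : ℝ × ℝ =>
      ∑ j ∈ A, rademacher (π j) q.1 * a j * chaos j q.2 :=
    Finset.measurable_sum _ fun j _ =>
      (((measurable_rad _).comp measurable_fst).mul_const _).mul
        ((measurable_chaos j).comp measurable_snd)
  have hmeast : ∀ t : ℝ, Measurable fun u =>
      ∑ j ∈ A, rademacher (π j) u * a j * chaos j t :=
    fun t => Finset.measurable_sum _ fun j _ => ((measurable_rad _).mul_const _).mul_const _
  have habs : ∀ u t : ℝ, |∑ j ∈ A, rademacher (π j) u * a j * chaos j t|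
      ≤ ∑ j ∈ A, |a j| := by
    intro u t
    refine (Finset.abs_sum_le_sum_abs _ _).trans
      (le_of_eq (Finset.sum_congr rfl fun j _ => ?_))
    rw [abs_mul, abs_mul, rad_abs, chaos_abs, one_mul, mul_one]
  have key_t : ∀ t : ℝ,
      (∫ u in Icc (0:ℝ) 1, |∑ j ∈ A, rademacher (π j) u * a j * chaos j t| ^ p)
      ≤ (((2 * k).factorial : ℝ) * (∑ j ∈ A, a j ^ 2) ^ k) ^ (p / (2 * (k:ℝ))) := by
    intro t
    have hrw : ∀ u : ℝ, ∑ j ∈ A, rademacher (π j) u * a j * chaos j t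
        = ∑ j ∈ A, (a j * chaos j t) * rademacher (π j) u :=
      fun u => Finset.sum_congr rfl fun j _ => by ring
    have hb2 : ∑ j ∈ A, (a j * chaos j t) ^ 2 = ∑ j ∈ A, a j ^ 2 :=
      Finset.sum_congr rfl fun j _ => by rw [mul_pow, chaos_sq, mul_one]
    have hmom := moment A.card A rfl π (fun x hx y hy h => hπ (hA hx) (hA hy) h)
      (fun j => a j * chaos j t) k
    rw [hb2] at hmom
    have he : (1:ℝ) ≤ 2 * (k:ℝ) / p := by
      rw [le_div_iff₀ hp0]
      linarith
    have h1 := mono_int (meas_rpow (hmeast t).abs hp0.le)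
      (fun u => Real.rpow_nonneg (abs_nonneg _) _)
      (C := (∑ j ∈ A, |a j|) ^ p)
      (fun u => Real.rpow_le_rpow (abs_nonneg _) (habs u t) hp0.le) he
    have hrr : ∀ u : ℝ,
        (|∑ j ∈ A, rademacher (π j) u * a j * chaos j t| ^ p) ^ (2 * (k:ℝ) / p)
        = (∑ j ∈ A, (a j * chaos j t) * rademacher (π j) u) ^ (2 * k) := by
      intro u
      rw [← Real.rpow_mul (abs_nonneg _)]
      rw [show p * (2 * (k:ℝ) / p) = ((2 * k : ℕ) : ℝ) by
        push_cast
        rw [mul_comm, div_mul_cancel₀ _ hpne]]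
      rw [Real.rpow_natCast, Even.pow_abs (even_two_mul k), hrw u]
    calc (∫ u in Icc (0:ℝ) 1, |∑ j ∈ A, rademacher (π j) u * a j * chaos j t| ^ p)
        ≤ (∫ u in Icc (0:ℝ) 1, (|∑ j ∈ A, rademacher (π j) u * a j * chaos j t| ^ p)
            ^ (2 * (k:ℝ) / p)) ^ (1 / (2 * (k:ℝ) / p)) := h1
      _ = (∫ u in Icc (0:ℝ) 1, (∑ j ∈ A, (a j * chaos j t) * rademacher (π j) u)
            ^ (2 * k)) ^ (p / (2 * (k:ℝ))) := by
          rw [one_div_div]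
          congr 1
          simp only [hrr]
      _ ≤ (((2 * k).factorial : ℝ) * (∑ j ∈ A, a j ^ 2) ^ k) ^ (p / (2 * (k:ℝ))) := by
          apply Real.rpow_le_rpow
            (integral_nonneg fun u => Even.pow_nonneg (even_two_mul k) _) hmom
          positivity
  have hch := chain (T := ∑ j ∈ A, |a j|) hmeasP habs hp1 key_t
  have hEq : (∫ u in Icc (0:ℝ) 1,
        LpNorm p (fun t => ∑ j ∈ A, rademacher (π j) u * a j * chaos j t))
      = ∫ u in Icc (0:ℝ) 1, (∫ t in Icc (0:ℝ) 1,
          |∑ j ∈ A, rademacher (π j) u * a j * chaos j t| ^ p) ^ (1/p) := rfl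
  have hK : ((((2 * k).factorial : ℝ) * (∑ j ∈ A, a j ^ 2) ^ k) ^ (p / (2 * (k:ℝ)))) ^ (1/p)
      = ((2 * k).factorial : ℝ) ^ ((1:ℝ) / (2 * (k:ℝ)))
          * (∑ j ∈ A, a j ^ 2) ^ ((1:ℝ)/2) := by
    rw [← Real.rpow_mul (by positivity)]
    rw [show p / (2 * (k:ℝ)) * (1/p) = 1 / (2 * (k:ℝ)) by
      field_simp]
    rw [Real.mul_rpow hfact.le (by positivity)]
    congr 1
    rw [← Real.rpow_natCast (∑ j ∈ A, a j ^ 2) k, ← Real.rpow_mul hS]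
    congr 1
    field_simp
  have hfS : (∑ j ∈ A, a j ^ 2) ^ ((1:ℝ)/2)
      ≤ LpNorm p (fun t => ∑ j ∈ A, a j * chaos j t) := by
    have hfm : Measurable fun t => ∑ j ∈ A, a j * chaos j t :=
      Finset.measurable_sum _ fun j _ => (measurable_chaos j).const_mul _
    have hfb : ∀ t : ℝ, |∑ j ∈ A, a j * chaos j t| ≤ ∑ j ∈ A, |a j| := fun t =>
      (Finset.abs_sum_le_sum_abs _ _).trans (le_of_eq (Finset.sum_congr rfl fun j _ => by
        rw [abs_mul, chaos_abs, mul_one]))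
    have he2 : (1:ℝ) ≤ p / 2 := by linarith
    have h2 := mono_int (g := fun t => (∑ j ∈ A, a j * chaos j t) ^ 2)
      (hfm.pow_const 2) (fun t => sq_nonneg _)
      (C := (∑ j ∈ A, |a j|) ^ 2)
      (fun t => by
        show (∑ j ∈ A, a j * chaos j t) ^ 2 ≤ (∑ j ∈ A, |a j|) ^ 2
        rw [← sq_abs (∑ j ∈ A, a j * chaos j t)]
        exact pow_le_pow_left₀ (abs_nonneg _) (hfb t) 2) he2
    rw [chaos_L2 A hA a] at h2
    have hptw : ∀ t : ℝ, ((∑ j ∈ A, a j * chaos j t) ^ 2 : ℝ) ^ (p/2)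
        = |∑ j ∈ A, a j * chaos j t| ^ p := by
      intro t
      rw [← sq_abs, ← Real.rpow_natCast |∑ j ∈ A, a j * chaos j t| 2,
        ← Real.rpow_mul (abs_nonneg _)]
      congr 1
      push_cast
      ring
    rw [show (1:ℝ) / (p/2) = 2/p by rw [one_div_div]] at h2
    simp only [hptw] at h2
    have h3 := Real.rpow_le_rpow hS h2 (by norm_num : (0:ℝ) ≤ 1/2)
    calc (∑ j ∈ A, a j ^ 2) ^ ((1:ℝ)/2)
        ≤ ((∫ t in Icc (0:ℝ) 1, |∑ j ∈ A, a j * chaos j t| ^ p) ^ ((2:ℝ)/p))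
            ^ ((1:ℝ)/2) := h3
      _ = (∫ t in Icc (0:ℝ) 1, |∑ j ∈ A, a j * chaos j t| ^ p) ^ (1/p) := by
          rw [← Real.rpow_mul (integral_nonneg fun t =>
            Real.rpow_nonneg (abs_nonneg _) _)]
          congr 1
          ring
      _ = LpNorm p (fun t => ∑ j ∈ A, a j * chaos j t) := rfl
  rw [hEq]
  refine le_trans hch (le_trans (le_of_eq hK) ?_)
  exact mul_le_mul_of_nonneg_left hfS (by positivity)

/-- the Rademacher chaos `{𝐫_ȷ}_{ȷ∈Δ^d}` is a RUC sequence in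
`L_p[0,1]` for every `2 ≤ p < ∞`. -/
theorem stmt6 (d : ℕ) (hd : 1 ≤ d) (p : ℝ) (hp : 2 ≤ p) :
    ∃ D > (0 : ℝ), ∀ π : (Fin d → ℕ) → ℕ, Set.InjOn π (Delta d) →
      ∀ A : Finset (Fin d → ℕ), ↑A ⊆ Delta d → ∀ a : (Fin d → ℕ) → ℝ,
        ∫ u in Set.Icc (0 : ℝ) 1,
            LpNorm p (fun t => ∑ j ∈ A, rademacher (π j) u * a j * chaos j t)
          ≤ D * LpNorm p (fun t => ∑ j ∈ A, a j * chaos j t) := by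
  have hp0 : (0:ℝ) < p := by linarith
  set k : ℕ := ⌈p / 2⌉₊ with hk
  have hk1 : 1 ≤ k := Nat.one_le_ceil_iff.mpr (by linarith)
  have hp2k : p ≤ 2 * (k:ℝ) := by
    have h := Nat.le_ceil (p / 2)
    rw [← hk] at h
    linarith
  refine ⟨((2 * k).factorial : ℝ) ^ ((1:ℝ) / (2 * (k:ℝ))),
    Real.rpow_pos_of_pos (by exact_mod_cast Nat.factorial_pos _) _, ?_⟩
  intro π hπ A hA a
  exact main_est hp hk1 hp2k π hπ A hA a
end

section
/- Let i < j, k < l, i₁ < j₁, k₁ < l₁ be positive integers such that {i, j, i+j} ∩ {k, l, k+l} = ∅ and {i, j, i+j, k, l, k+l} = {i₁, j₁, i₁+j₁, k₁, l₁, k₁+l₁} as sets. Then {i, j, k, l} = {i₁, j₁, k₁, l₁}, and moreover either (i+j = i₁+j₁ and k+l = k₁+l₁) or (i+j = k₁+l₁ and k+l = i₁+j₁). (Intermediate claim in the proof that A_N^♯ = ∅, obtained by comparing the maximum and the sum of the elements of the two six-element sets.) -/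
lemma card4' (a b c d : ℕ) : ({a,b,c,d} : Finset ℕ).card ≤ 4 := by
  refine le_trans (Finset.card_insert_le _ _) ?_
  refine le_trans (Nat.add_le_add_right (Finset.card_insert_le _ _) 1) ?_
  refine le_trans (Nat.add_le_add_right (Nat.add_le_add_right (Finset.card_insert_le _ _) 1) 1) ?_
  simp

lemma card5' (a b c d e : ℕ) : ({a,b,c,d,e} : Finset ℕ).card ≤ 5 := by
  refine le_trans (Finset.card_insert_le _ _) ?_
  have := card4' b c d e
  omega

lemma step6 (a b c d e f : ℕ) (h : ({a,b,c,d,e,f} : Finset ℕ).card = 6) :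
    a ∉ ({b,c,d,e,f} : Finset ℕ) ∧ ({b,c,d,e,f} : Finset ℕ).card = 5 := by
  have h5 := card5' b c d e f
  by_cases hm : a ∈ ({b,c,d,e,f} : Finset ℕ)
  · rw [show ({a,b,c,d,e,f} : Finset ℕ) = {b,c,d,e,f} from Finset.insert_eq_self.mpr hm] at h
    omega
  · rw [Finset.card_insert_of_notMem hm] at h
    exact ⟨hm, by omega⟩

lemma step5 (a b c d e : ℕ) (h : ({a,b,c,d,e} : Finset ℕ).card = 5) :
    a ∉ ({b,c,d,e} : Finset ℕ) ∧ ({b,c,d,e} : Finset ℕ).card = 4 := by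
  have h4 := card4' b c d e
  by_cases hm : a ∈ ({b,c,d,e} : Finset ℕ)
  · rw [show ({a,b,c,d,e} : Finset ℕ) = {b,c,d,e} from Finset.insert_eq_self.mpr hm] at h
    omega
  · rw [Finset.card_insert_of_notMem hm] at h
    exact ⟨hm, by omega⟩

lemma step4 (a b c d : ℕ) (h : ({a,b,c,d} : Finset ℕ).card = 4) :
    a ∉ ({b,c,d} : Finset ℕ) := by
  intro hm
  rw [show ({a,b,c,d} : Finset ℕ) = {b,c,d} from Finset.insert_eq_self.mpr hm] at h
  have : ({b,c,d} : Finset ℕ).card ≤ 3 := by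
    refine le_trans (Finset.card_insert_le _ _) ?_
    refine le_trans (Nat.add_le_add_right (Finset.card_insert_le _ _) 1) ?_
    simp
  omega

set_option maxHeartbeats 1000000 in
/-- if the six-element sets `{i,j,i+j,k,l,k+l}` and
`{i₁,j₁,i₁+j₁,k₁,l₁,k₁+l₁}` coincide and `{i,j,i+j} ∩ {k,l,k+l} = ∅`, then
`{i,j,k,l} = {i₁,j₁,k₁,l₁}` and the two top sums match up. -/
theorem stmt13 (i j k l i₁ j₁ k₁ l₁ : ℕ)
    (hi : 0 < i) (hk : 0 < k) (hi₁ : 0 < i₁) (hk₁ : 0 < k₁)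
    (hij : i < j) (hkl : k < l) (hij₁ : i₁ < j₁) (hkl₁ : k₁ < l₁)
    (hdisj : ({i, j, i + j} : Set ℕ) ∩ {k, l, k + l} = ∅)
    (heq : ({i, j, i + j, k, l, k + l} : Set ℕ) = {i₁, j₁, i₁ + j₁, k₁, l₁, k₁ + l₁}) :
    ({i, j, k, l} : Set ℕ) = {i₁, j₁, k₁, l₁} ∧
      ((i + j = i₁ + j₁ ∧ k + l = k₁ + l₁) ∨ (i + j = k₁ + l₁ ∧ k + l = i₁ + j₁)) := by
  -- membership transfer
  have hmem : ∀ x : ℕ, (x = i ∨ x = j ∨ x = i+j ∨ x = k ∨ x = l ∨ x = k+l) ↔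
      (x = i₁ ∨ x = j₁ ∨ x = i₁+j₁ ∨ x = k₁ ∨ x = l₁ ∨ x = k₁+l₁) := by
    intro x
    have := Set.ext_iff.mp heq x
    simpa [Set.mem_insert_iff] using this
  -- disjointness inequalities
  have hd : ∀ x : ℕ, ¬((x = i ∨ x = j ∨ x = i+j) ∧ (x = k ∨ x = l ∨ x = k+l)) := by
    intro x hx
    have : x ∈ (({i,j,i+j} : Set ℕ) ∩ {k,l,k+l}) := by
      simp [Set.mem_insert_iff]; tauto
    rw [hdisj] at this
    exact this
  have n1 : i ≠ k := fun h => hd i ⟨Or.inl rfl, Or.inl h⟩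
  have n2 : i ≠ l := fun h => hd i ⟨Or.inl rfl, Or.inr (Or.inl h)⟩
  have n3 : i ≠ k+l := fun h => hd i ⟨Or.inl rfl, Or.inr (Or.inr h)⟩
  have n4 : j ≠ k := fun h => hd j ⟨Or.inr (Or.inl rfl), Or.inl h⟩
  have n5 : j ≠ l := fun h => hd j ⟨Or.inr (Or.inl rfl), Or.inr (Or.inl h)⟩
  have n6 : j ≠ k+l := fun h => hd j ⟨Or.inr (Or.inl rfl), Or.inr (Or.inr h)⟩
  have n7 : i+j ≠ k := fun h => hd (i+j) ⟨Or.inr (Or.inr rfl), Or.inl h⟩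
  have n8 : i+j ≠ l := fun h => hd (i+j) ⟨Or.inr (Or.inr rfl), Or.inr (Or.inl h)⟩
  have n9 : i+j ≠ k+l := fun h => hd (i+j) ⟨Or.inr (Or.inr rfl), Or.inr (Or.inr h)⟩
  -- Finset equality
  have hT : ({i,j,i+j,k,l,k+l} : Finset ℕ) = {i₁,j₁,i₁+j₁,k₁,l₁,k₁+l₁} := by
    apply Finset.coe_injective
    simpa [Finset.coe_insert, Finset.coe_singleton] using heq
  have hcard : ({i,j,i+j,k,l,k+l} : Finset ℕ).card = 6 := by
    rw [Finset.card_insert_of_notMem (by simp; omega)]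
    rw [Finset.card_insert_of_notMem (by simp; omega)]
    rw [Finset.card_insert_of_notMem (by simp; omega)]
    rw [Finset.card_insert_of_notMem (by simp; omega)]
    rw [Finset.card_insert_of_notMem (by simp; omega)]
    simp
  have hcard' : ({i₁,j₁,i₁+j₁,k₁,l₁,k₁+l₁} : Finset ℕ).card = 6 := by rw [← hT]; exact hcard
  -- primed distinctness
  obtain ⟨p1, c5⟩ := step6 _ _ _ _ _ _ hcard'
  obtain ⟨p2, c4⟩ := step5 _ _ _ _ _ c5
  have p3 := step4 _ _ _ _ c4
  simp only [Finset.mem_insert, Finset.mem_singleton, not_or] at p1 p2 p3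
  obtain ⟨q1, q2, q3, q4, q5⟩ := p1
  obtain ⟨q6, q7, q8, q9⟩ := p2
  obtain ⟨q10, q11, q12⟩ := p3
  -- sum equality
  have hs1 : ({i,j,i+j,k,l,k+l} : Finset ℕ).sum id = i+j+(i+j)+k+l+(k+l) := by
    rw [Finset.sum_insert (by simp; omega), Finset.sum_insert (by simp; omega),
      Finset.sum_insert (by simp; omega), Finset.sum_insert (by simp; omega),
      Finset.sum_insert (by simp; omega), Finset.sum_singleton]
    simp; omega
  have hs2 : ({i₁,j₁,i₁+j₁,k₁,l₁,k₁+l₁} : Finset ℕ).sum id = i₁+j₁+(i₁+j₁)+k₁+l₁+(k₁+l₁) := by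
    rw [Finset.sum_insert (by simp; omega), Finset.sum_insert (by simp; omega),
      Finset.sum_insert (by simp; omega), Finset.sum_insert (by simp; omega),
      Finset.sum_insert (by simp; omega), Finset.sum_singleton]
    simp; omega
  have hsum : i+j+k+l = i₁+j₁+k₁+l₁ := by
    have := hT ▸ hs1
    rw [hs2] at this
    omega
  -- the two top sums
  have h1 := (hmem (i+j)).mp (by omega)
  have h2 := (hmem (k+l)).mp (by omega)
  have h3 := (hmem (i₁+j₁)).mpr (by omega)
  have h4 := (hmem (k₁+l₁)).mpr (by omega)
  have hAB : (i + j = i₁ + j₁ ∧ k + l = k₁ + l₁) ∨ (i + j = k₁ + l₁ ∧ k + l = i₁ + j₁) := by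
    clear hmem hd hdisj heq hT hs1 hs2 hcard hcard' c5 c4
    omega
  clear h1 h2 h3 h4 hd hdisj heq hT hs1 hs2 hcard hcard' c5 c4 hsum
  refine ⟨?_, hAB⟩
  ext x
  simp only [Set.mem_insert_iff, Set.mem_singleton_iff]
  constructor
  · intro hx
    have := (hmem x).mp (by omega)
    omega
  · intro hx
    have := (hmem x).mpr (by omega)
    omega
end

section
/- Let i < j, k < l, i₁ < j₁, k₁ < l₁ be positive integers such that {i, j, i+j} ∩ {k, l, k+l} = ∅ and {i, j, i+j, k, l, k+l} = {i₁, j₁, i₁+j₁, k₁, l₁, k₁+l₁} as sets. Then (i₁, j₁) = (i, j) or (i₁, j₁) = (k, l). Consequently, for A = {(i,j,i+j) : 1 ≤ i < j} and A_N = A ∩ {1,…,N}³, the set A_N^♯ of Section 4.2 is empty: there is no pair of disjointly supported triples of A_N whose union of entries can be re-split into two triples of A_N in a genuinely different way. -/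
set_option maxHeartbeats 1000000

lemma nodup_of_card6 (a b c d e f : ℕ) (h : ({a,b,c,d,e,f} : Finset ℕ).card = 6) :
    ([a,b,c,d,e,f] : List ℕ).Nodup := by
  have h1 : ([a,b,c,d,e,f] : List ℕ).toFinset = {a,b,c,d,e,f} := by simp
  have h2 : ([a,b,c,d,e,f] : List ℕ).dedup.length = 6 := by
    rw [← List.card_toFinset, h1, h]
  exact List.dedup_eq_self.mp
    (List.Sublist.eq_of_length (List.dedup_sublist _) (by simp [h2]))

lemma key (i j k l i₁ j₁ k₁ l₁ : ℕ)
    (hi : 0 < i) (hk : 0 < k) (hi₁ : 0 < i₁) (hk₁ : 0 < k₁)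
    (hij : i < j) (hkl : k < l) (hij₁ : i₁ < j₁) (hkl₁ : k₁ < l₁)
    (hdisj : ({i, j, i + j} : Set ℕ) ∩ {k, l, k + l} = ∅)
    (heq : ({i, j, i + j, k, l, k + l} : Set ℕ) = {i₁, j₁, i₁ + j₁, k₁, l₁, k₁ + l₁}) :
    (i₁ = i ∧ j₁ = j) ∨ (i₁ = k ∧ j₁ = l) := by
  have hd : ∀ x, x ∈ ({i,j,i+j} : Set ℕ) → x ∉ ({k,l,k+l} : Set ℕ) := by
    intro x hx hx'
    have : x ∈ ({i,j,i+j} : Set ℕ) ∩ {k,l,k+l} := ⟨hx, hx'⟩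
    rw [hdisj] at this; exact this
  have d1 : i ≠ k ∧ i ≠ l ∧ i ≠ k + l := by
    have := hd i (by simp); simpa using this
  have d2 : j ≠ k ∧ j ≠ l ∧ j ≠ k + l := by
    have := hd j (by simp); simpa using this
  have d3 : i + j ≠ k ∧ i + j ≠ l ∧ i + j ≠ k + l := by
    have := hd (i+j) (by simp); simpa using this
  clear hd hdisj
  have hFs : ({i,j,i+j,k,l,k+l} : Finset ℕ) = {i₁,j₁,i₁+j₁,k₁,l₁,k₁+l₁} := by
    apply Finset.coe_injective; simpa using heq
  clear heq
  have hnodL : ([i,j,i+j,k,l,k+l] : List ℕ).Nodup := by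
    simp; omega
  have hcard : ({i,j,i+j,k,l,k+l} : Finset ℕ).card = 6 := by
    have h1 : ([i,j,i+j,k,l,k+l] : List ℕ).toFinset = {i,j,i+j,k,l,k+l} := by simp
    rw [← h1, List.toFinset_card_of_nodup hnodL]; rfl
  have hnodR := nodup_of_card6 i₁ j₁ (i₁+j₁) k₁ l₁ (k₁+l₁) (by rw [← hFs]; exact hcard)
  have hsum : i + j + k + l = i₁ + j₁ + k₁ + l₁ := by
    have hL : ([i,j,i+j,k,l,k+l] : List ℕ).toFinset = {i,j,i+j,k,l,k+l} := by simp
    have hR : ([i₁,j₁,i₁+j₁,k₁,l₁,k₁+l₁] : List ℕ).toFinset = {i₁,j₁,i₁+j₁,k₁,l₁,k₁+l₁} := by simp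
    have := congrArg (fun s : Finset ℕ => s.sum id) hFs
    simp only [← hL, ← hR, List.sum_toFinset _ hnodL, List.sum_toFinset _ hnodR] at this
    simp at this
    omega
  clear hnodL hcard
  simp only [List.nodup_cons, List.mem_cons, List.not_mem_nil, or_false,
    List.nodup_nil, and_true, not_or] at hnodR
  have mem : ∀ x, x ∈ ({i₁,j₁,i₁+j₁,k₁,l₁,k₁+l₁} : Finset ℕ) →
      x = i ∨ x = j ∨ x = i + j ∨ x = k ∨ x = l ∨ x = k + l := by
    intro x hx; rw [← hFs] at hx; simpa using hx
  have m3 := mem (i₁+j₁) (by simp)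
  have m6 := mem (k₁+l₁) (by simp)
  have h1 : (i₁+j₁ = i+j ∧ k₁+l₁ = k+l) ∨ (i₁+j₁ = k+l ∧ k₁+l₁ = i+j) := by
    omega
  clear m3 m6
  have m1 := mem i₁ (by simp)
  have m2 := mem j₁ (by simp)
  omega

/-- under the hypotheses of Statement 13, `(i₁,j₁) = (i,j)` or
`(i₁,j₁) = (k,l)`; consequently the set `A_N^♯` of Section 4.2 is empty. -/
theorem stmt14 (i j k l i₁ j₁ k₁ l₁ : ℕ)
    (hi : 0 < i) (hk : 0 < k) (hi₁ : 0 < i₁) (hk₁ : 0 < k₁)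
    (hij : i < j) (hkl : k < l) (hij₁ : i₁ < j₁) (hkl₁ : k₁ < l₁)
    (hdisj : ({i, j, i + j} : Set ℕ) ∩ {k, l, k + l} = ∅)
    (heq : ({i, j, i + j, k, l, k + l} : Set ℕ) = {i₁, j₁, i₁ + j₁, k₁, l₁, k₁ + l₁}) :
    ((i₁, j₁) = (i, j) ∨ (i₁, j₁) = (k, l)) ∧
      ∀ N : ℕ, ¬ ∃ a b c e a₁ b₁ c₁ e₁ : ℕ,
        0 < a ∧ a < b ∧ 0 < c ∧ c < e ∧ 0 < a₁ ∧ a₁ < b₁ ∧ 0 < c₁ ∧ c₁ < e₁ ∧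
        a + b ≤ N ∧ c + e ≤ N ∧ a₁ + b₁ ≤ N ∧ c₁ + e₁ ≤ N ∧
        ({a, b, a + b} : Set ℕ) ∩ {c, e, c + e} = ∅ ∧
        ({a, b, a + b, c, e, c + e} : Set ℕ) = {a₁, b₁, a₁ + b₁, c₁, e₁, c₁ + e₁} ∧
        (a₁, b₁) ≠ (a, b) ∧ (a₁, b₁) ≠ (c, e) := by
  constructor
  · rcases key i j k l i₁ j₁ k₁ l₁ hi hk hi₁ hk₁ hij hkl hij₁ hkl₁ hdisj heq with
      ⟨h1, h2⟩ | ⟨h1, h2⟩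
    · left; simp [h1, h2]
    · right; simp [h1, h2]
  · intro N ⟨a, b, c, e, a₁, b₁, c₁, e₁, ha, hab, hc, hce, ha₁, hab₁, hc₁, hce₁,
      _, _, _, _, hdisj', heq', hne1, hne2⟩
    rcases key a b c e a₁ b₁ c₁ e₁ ha hc ha₁ hc₁ hab hce hab₁ hce₁ hdisj' heq' with
      ⟨h1, h2⟩ | ⟨h1, h2⟩
    · exact hne1 (by simp [h1, h2])
    · exact hne2 (by simp [h1, h2])
end
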